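/- arXiv:2603.11043 — 2 statements merged into one kernel-verified Lean document; each statement's English description precedes it below -/
import Mathlib

section
/- Let μ and μ' be probability measures on ℤ with rational probabilities and finite supports. Assume μ' is symmetric and unimodal and μ ≼_ε μ' for some ε ≥ 0. Then there exists a coupling of random variables Z ~ μ⁺ and X' ~ μ' and an event A with P(A) ≥ 1/(1+ε) such that the conditional law of Z given A is μ⁺ and, conditioned on A, either 0 ≤ X' ≤ Z or Z − 1 ≤ X' ≤ 0; moreover, if P(Aᶜ) > 0 then the conditional law of Z given Aᶜ is μ⁺ and Z and X' are conditionally independent given Aᶜ. -/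
open MeasureTheory ProbabilityTheory
open scoped ENNReal ProbabilityTheory

noncomputable section

/-- `Q(μ)`: the maximal atom of a measure on `ℤ`. -/
def concQ (μ : MeasureTheory.Measure ℤ) : ℝ := ⨆ x : ℤ, (μ {x}).toReal

/-- `Q(X)`: the maximal atom of an integer-valued random variable. -/
def rvQ {Ω : Type*} [MeasurableSpace Ω] (P : MeasureTheory.Measure Ω) (X : Ω → ℤ) : ℝ :=
  ⨆ x : ℤ, (P (X ⁻¹' {x})).toReal

/-- `Q_j(μ)`: the sum of the `j` largest atoms of a measure on `ℤ`,
expressed as the supremum of the masses of sets of `j` integers. -/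
def concQk (μ : MeasureTheory.Measure ℤ) (j : ℕ) : ℝ :=
  sSup {t : ℝ | ∃ A : Finset ℤ, A.card = j ∧ t = (μ (A : Set ℤ)).toReal}

/-- `μ₁ ≼_ε μ₂`: the concentration function of `μ₁` is `ε`-dominated by that of `μ₂`. -/
def EpsDom (ε : ℝ) (μ₁ μ₂ : MeasureTheory.Measure ℤ) : Prop :=
  ∀ j : ℕ, 0 < j → concQk μ₁ j ≤ (1 + ε) * concQk μ₂ j

/-- The measure `ν_α` on `ℤ`. -/
def nu (α : ℝ) : MeasureTheory.Measure ℤ :=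
  (∑ i ∈ Finset.range ⌊α⁻¹⌋₊, ENNReal.ofReal α • MeasureTheory.Measure.dirac (i : ℤ)) +
    ENNReal.ofReal (1 - α * (⌊α⁻¹⌋₊ : ℝ)) • MeasureTheory.Measure.dirac ((⌊α⁻¹⌋₊ : ℕ) : ℤ)

/-- The law of the sum of independent random variables with laws `μ i`,
i.e. the convolution of the measures `μ i`. -/
def lawSum {n : ℕ} (μ : Fin n → MeasureTheory.Measure ℤ) : MeasureTheory.Measure ℤ :=
  MeasureTheory.Measure.map (fun x : Fin n → ℤ => ∑ i, x i) (MeasureTheory.Measure.pi μ)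

/-- The variance of a measure on `ℤ`. -/
def intVar (μ : MeasureTheory.Measure ℤ) : ℝ := variance (fun n : ℤ => (n : ℝ)) μ

/-- The variance of `ν_α`. -/
def varNu (α : ℝ) : ℝ := intVar (nu α)

/-- A measure on `ℤ` is log-concave. -/
def IsLogConcave (μ : MeasureTheory.Measure ℤ) : Prop :=
  ∀ i : ℤ, μ {i - 1} * μ {i + 1} ≤ μ {i} ^ 2

/-- A measure on `ℤ` is symmetric. -/
def IsSymmetricZ (μ : MeasureTheory.Measure ℤ) : Prop := ∀ i : ℤ, μ {-i} = μ {i}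

/-- A measure on `ℤ` is unimodal. -/
def IsUnimodal (μ : MeasureTheory.Measure ℤ) : Prop :=
  ∃ m : ℤ, (∀ i, m ≤ i → μ {i + 1} ≤ μ {i}) ∧ (∀ i, i ≤ m → μ {i - 1} ≤ μ {i})

/-- A measure on `ℤ` is standard extremal for `α`: it is the law of `X + i`
where `X ~ ν_α` or `-X ~ ν_α`. -/
def StandardExtremal (α : ℝ) (μ : MeasureTheory.Measure ℤ) : Prop :=
  ∃ i : ℤ, μ = MeasureTheory.Measure.map (· + i) (nu α) ∨
    μ = MeasureTheory.Measure.map (fun x => -x + i) (nu α)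

/-- A measure on `ℤ` is extremal for `α`. -/
def IsExtremal (α : ℝ) (μ : MeasureTheory.Measure ℤ) : Prop :=
  ∃ (S : Finset ℤ) (b : ℤ), S.card = ⌊α⁻¹⌋₊ ∧ b ∉ S ∧
    (∀ i ∈ S, μ {i} = ENNReal.ofReal α) ∧
    μ {b} = ENNReal.ofReal (1 - (⌊α⁻¹⌋₊ : ℝ) * α)

/-- A sequence of measures is a balanced standard extremal sequence for `α`. -/
def BalancedSE {n : ℕ} (α : Fin n → ℝ) (μ : Fin n → MeasureTheory.Measure ℤ) : Prop :=
  (∀ i, StandardExtremal (α i) (μ i)) ∧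
    ∃ σ : Equiv.Perm (Fin n), ∀ i,
      μ (σ i) = MeasureTheory.Measure.map (fun x : ℤ => -x) (μ i)

/-- A tuple is balanced if a balanced standard extremal sequence exists for it. -/
def BalancedTuple {n : ℕ} (α : Fin n → ℝ) : Prop := ∃ μ, BalancedSE α μ

/-- A tuple is strongly balanced if each value is attained an even number of times. -/
def StronglyBalanced {n : ℕ} (α : Fin n → ℝ) : Prop :=
  ∀ a : ℝ, Even (Finset.univ.filter fun i => α i = a).card

/-- `t_SE^bal(α)`: the probability that the sum of a balanced standard extremal
sequence for `α` equals `0` (this value does not depend on the chosen sequence). -/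
def tSEbal {n : ℕ} (α : Fin n → ℝ) : ℝ :=
  sSup {t : ℝ | ∃ μ : Fin n → MeasureTheory.Measure ℤ,
    BalancedSE α μ ∧ t = (lawSum μ {0}).toReal}

/-- `t(α)`: the supremum of `Q(μ₁ * ⋯ * μ_n)` over probability measures with
`Q(μ i) ≤ α i`. -/
def tOpt {n : ℕ} (α : Fin n → ℝ) : ℝ :=
  sSup {t : ℝ | ∃ μ : Fin n → MeasureTheory.Measure ℤ,
    (∀ i, MeasureTheory.IsProbabilityMeasure (μ i)) ∧
    (∀ i, concQ (μ i) ≤ α i) ∧ t = concQ (lawSum μ)}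

/-- `t_SE(α)`: the maximal concentration of the convolution of a standard extremal
sequence for `α`. -/
def tSE {n : ℕ} (α : Fin n → ℝ) : ℝ :=
  sSup {t : ℝ | ∃ μ : Fin n → MeasureTheory.Measure ℤ,
    (∀ i, StandardExtremal (α i) (μ i)) ∧ t = concQ (lawSum μ)}

end

/-- The enumeration `0, 1, -1, 2, -2, …` of the integers. -/
def zenum (n : ℕ) : ℤ := if n % 2 = 1 then ((n : ℤ) + 1) / 2 else -((n : ℤ) / 2)

/-- `ν` is the rearrangement `μ⁺` of `μ`: a rearrangement of the atoms of `μ`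
which is non-increasing along the enumeration `0, 1, -1, 2, -2, …`. -/
def IsPlusRearrangement (μ ν : MeasureTheory.Measure ℤ) : Prop :=
  (∃ f : ℤ ≃ ℤ, ∀ x : ℤ, ν {x} = μ {f x}) ∧
    ∀ m n : ℕ, m ≤ n → ν {zenum n} ≤ ν {zenum m}

/-- `ν` is the rearrangement `⁺μ` of `μ`: a rearrangement of the atoms of `μ`
which is non-increasing along the enumeration `0, -1, 1, -2, 2, …`. -/
def IsMinusRearrangement (μ ν : MeasureTheory.Measure ℤ) : Prop :=
  (∃ f : ℤ ≃ ℤ, ∀ x : ℤ, ν {x} = μ {f x}) ∧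
    ∀ m n : ℕ, m ≤ n → ν {-zenum n} ≤ ν {-zenum m}

/-- `ν` is the symmetric decreasing rearrangement `μ*` of `μ` (it exists iff `μ⁺ = ⁺μ`). -/
def IsSymmDecRearrangement (μ ν : MeasureTheory.Measure ℤ) : Prop :=
  IsPlusRearrangement μ ν ∧ IsMinusRearrangement μ ν

/-- A coupling witnessing the conclusion of Statement 12: random variables
`Z ~ ν` and `X' ~ μ'` on a common probability space together with an event `A`. -/
structure PlusCoupling (ν μ' : MeasureTheory.Measure ℤ) (ε : ℝ) where
  (Ω : Type)
  [mΩ : MeasurableSpace Ω]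
  (P : MeasureTheory.Measure Ω)
  (probP : MeasureTheory.IsProbabilityMeasure P)
  (Z : Ω → ℤ)
  (X' : Ω → ℤ)
  (A : Set Ω)
  (measZ : Measurable Z)
  (measX' : Measurable X')
  (measA : MeasurableSet A)
  (lawZ : MeasureTheory.Measure.map Z P = ν)
  (lawX' : MeasureTheory.Measure.map X' P = μ')
  (probA : 1 / (1 + ε) ≤ (P A).toReal)
  (condLawZ : MeasureTheory.Measure.map Z (P[|A]) = ν)
  (order : ∀ᵐ ω ∂P, ω ∈ A →
    (0 ≤ X' ω ∧ X' ω ≤ Z ω) ∨ (Z ω - 1 ≤ X' ω ∧ X' ω ≤ 0))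
  (condLawZcompl : P Aᶜ ≠ 0 → MeasureTheory.Measure.map Z (P[|Aᶜ]) = ν)
  (indepCompl : P Aᶜ ≠ 0 → IndepFun Z X' (P[|Aᶜ]))


namespace St12

lemma zenum_odd (k : ℕ) : zenum (2 * k + 1) = (k : ℤ) + 1 := by
  unfold zenum
  have h : (2 * k + 1) % 2 = 1 := by omega
  rw [if_pos h]
  push_cast
  omega

lemma zenum_even (k : ℕ) : zenum (2 * k) = -(k : ℤ) := by
  unfold zenum
  have h : (2 * k) % 2 ≠ 1 := by omega
  rw [if_neg h]
  push_cast
  omega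

lemma zenum_zero : zenum 0 = 0 := by simpa using zenum_even 0

def izenum (z : ℤ) : ℕ := if 0 < z then (2 * z - 1).toNat else (2 * (-z)).toNat

lemma izenum_zenum (n : ℕ) : izenum (zenum n) = n := by
  rcases Nat.even_or_odd n with ⟨k, hk⟩ | ⟨k, hk⟩
  · have : n = 2 * k := by omega
    subst this
    rw [zenum_even, izenum]
    rw [if_neg (by omega)]
    omega
  · have : n = 2 * k + 1 := by omega
    subst this
    rw [zenum_odd, izenum]
    rw [if_pos (by omega)]
    omega

lemma zenum_izenum (z : ℤ) : zenum (izenum z) = z := by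
  rw [izenum]
  by_cases h : 0 < z
  · rw [if_pos h]
    have h1 : (2 * z - 1).toNat = 2 * (z - 1).toNat + 1 := by omega
    rw [h1, zenum_odd]
    omega
  · rw [if_neg h]
    have h1 : (2 * (-z)).toNat = 2 * (-z).toNat := by omega
    rw [h1, zenum_even]
    omega

lemma zenum_injective : Function.Injective zenum :=
  Function.LeftInverse.injective izenum_zenum

lemma izenum_injective : Function.Injective izenum :=
  Function.LeftInverse.injective zenum_izenum

lemma izenum_odd_of_pos {z : ℤ} (hz : 0 < z) : izenum z = 2 * (z - 1).toNat + 1 := by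
  rw [izenum, if_pos hz]; omega

lemma izenum_even_of_nonpos {z : ℤ} (hz : ¬ 0 < z) : izenum z = 2 * (-z).toNat := by
  rw [izenum, if_neg hz]; omega

/-- sum over a finset of naturals of an antitone function is at most the sum over
an initial segment of the same size -/
lemma sum_finset_le_sum_range {u : ℕ → ℝ} (hu : Antitone u) (B : Finset ℕ) :
    ∑ b ∈ B, u b ≤ ∑ i ∈ Finset.range B.card, u i := by
  induction B using Finset.induction_on_max with
  | empty => simp
  | insert a s ha ih =>
    have hna : a ∉ s := fun h => lt_irrefl a (ha a h)
    rw [Finset.sum_insert hna, Finset.card_insert_of_notMem hna, Finset.sum_range_succ]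
    have hcard : s.card ≤ a := by
      have : s ⊆ Finset.range a := fun x hx => Finset.mem_range.mpr (ha x hx)
      simpa using Finset.card_le_card this
    have := hu hcard
    linarith

lemma sum_range_even_odd (g : ℕ → ℝ) (s : ℕ) :
    ∑ i ∈ Finset.range (2 * s), g i
      = ∑ i ∈ Finset.range s, g (2 * i) + ∑ i ∈ Finset.range s, g (2 * i + 1) := by
  induction s with
  | zero => simp
  | succ n ih =>
    have h : 2 * (n + 1) = (2 * n) + 1 + 1 := by ring
    rw [h, Finset.sum_range_succ, Finset.sum_range_succ, ih,
      Finset.sum_range_succ, Finset.sum_range_succ]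
    ring

section Core

variable (p q : ℕ → ℝ) (d : ℝ)

/-- The core combinatorial inequality. -/
lemma core_ineq (hp : Antitone p) (hq0 : ∀ i, 0 ≤ q i)
    (hpair : ∀ x, q (2 * x + 2) = q (2 * x + 1))
    (hd : 0 ≤ d)
    (hpre : ∀ j, ∑ i ∈ Finset.range j, p i ≤ d * ∑ i ∈ Finset.range j, q i)
    (s t : ℕ) :
    ∑ i ∈ Finset.range s, p (2 * i + 1) + ∑ i ∈ Finset.range t, p (2 * i)
      ≤ d * (q 0 + ∑ x ∈ Finset.range s, q (2 * x + 1)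
          + ∑ x ∈ Finset.range t, q (2 * x + 2)) := by
  have hsucc2 : ∀ (u : ℕ → ℝ) (m : ℕ), ∑ i ∈ Finset.range (m + 1 + 1), u i
      = ∑ i ∈ Finset.range m, u i + u m + u (m+1) := by
    intro u m
    rw [Finset.sum_range_succ, Finset.sum_range_succ]
  have hQmono : ∀ a b : ℕ, a ≤ b →
      ∑ i ∈ Finset.range a, q i ≤ ∑ i ∈ Finset.range b, q i := by
    intro a b hab
    exact Finset.sum_le_sum_of_subset_of_nonneg (Finset.range_subset_range.mpr hab)
      (fun i _ _ => hq0 i)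
  have H3 : ∀ s : ℕ, ∑ i ∈ Finset.range (2 * s + 1), q i
      = q 0 + 2 * ∑ x ∈ Finset.range s, q (2 * x + 1) := by
    intro s
    induction s with
    | zero => simp
    | succ n ih =>
      have e : 2 * (n + 1) + 1 = (2 * n + 1) + 1 + 1 := by ring
      rw [e, hsucc2 q (2*n+1), ih, Finset.sum_range_succ]
      have e2 : 2*n+1+1 = 2*n+2 := by ring
      rw [e2, hpair n]
      ring
  have H4 : ∀ t : ℕ, ∑ i ∈ Finset.range (2 * t + 1), q i
      = q 0 + 2 * ∑ x ∈ Finset.range t, q (2 * x + 2) := by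
    intro t
    rw [H3 t]
    have : ∀ x ∈ Finset.range t, q (2 * x + 1) = q (2 * x + 2) :=
      fun x _ => (hpair x).symm
    rw [Finset.sum_congr rfl this]
  have key : 2 * (∑ i ∈ Finset.range s, p (2 * i + 1) + ∑ i ∈ Finset.range t, p (2 * i))
      ≤ d * (∑ i ∈ Finset.range (2 * s + 1), q i + ∑ i ∈ Finset.range (2 * t + 1), q i) := by
    rcases lt_trichotomy s t with hst | hst | hst
    · -- s < t
      have H5 : ∀ t' : ℕ, s < t' →
          2 * (∑ i ∈ Finset.range s, p (2 * i + 1) + ∑ i ∈ Finset.range t', p (2 * i))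
            ≤ ∑ i ∈ Finset.range (2 * s + 1), p i + ∑ i ∈ Finset.range (2 * t' - 1), p i := by
        intro t' ht'
        induction t' with
        | zero => omega
        | succ n ih =>
          rcases Nat.lt_or_ge s n with hsn | hsn
          · have hih := ih hsn
            rw [Finset.sum_range_succ]
            have h1 : p (2 * n) ≤ p (2 * n - 1) := hp (by omega)
            have h2 : ∑ i ∈ Finset.range (2 * (n+1) - 1), p i
                = ∑ i ∈ Finset.range (2 * n - 1), p i + p (2*n - 1) + p (2 * n) := by
              have e1 : 2 * (n + 1) - 1 = (2 * n - 1) + 1 + 1 := by omega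
              have e2 : 2*n-1+1 = 2*n := by omega
              rw [e1, hsucc2 p (2*n-1), e2]
            rw [h2]
            linarith
          · have hsn' : s = n := by omega
            subst hsn'
            rw [Finset.sum_range_succ]
            have hsplit := sum_range_even_odd p s
            have hP1 : ∑ i ∈ Finset.range (2 * s + 1), p i
                = ∑ i ∈ Finset.range (2 * s), p i + p (2 * s) := Finset.sum_range_succ p (2*s)
            have e2 : 2 * (s+1) - 1 = 2 * s + 1 := by omega
            rw [e2, hP1]
            linarith
      have h5 := H5 t hst
      have hp1 := hpre (2 * s + 1)
      have hp2 := hpre (2 * t - 1)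
      have hq2 := hQmono (2 * t - 1) (2 * t + 1) (by omega)
      nlinarith
    · subst hst
      have hsplit := sum_range_even_odd p s
      have hp1 := hpre (2 * s)
      have hq2 := hQmono (2 * s) (2 * s + 1) (by omega)
      nlinarith
    · -- t < s
      have H6 : ∀ s' : ℕ, t < s' →
          2 * (∑ i ∈ Finset.range s', p (2 * i + 1) + ∑ i ∈ Finset.range t, p (2 * i))
            ≤ ∑ i ∈ Finset.range (2 * t), p i + ∑ i ∈ Finset.range (2 * s'), p i := by
        intro s' hs'
        induction s' with
        | zero => omega
        | succ n ih =>
          rcases Nat.lt_or_ge t n with htn | htn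
          · have hih := ih htn
            rw [Finset.sum_range_succ]
            have h1 : p (2 * n + 1) ≤ p (2 * n) := hp (by omega)
            have h2 : ∑ i ∈ Finset.range (2 * (n+1)), p i
                = ∑ i ∈ Finset.range (2 * n), p i + p (2*n) + p (2 * n + 1) := by
              have e1 : 2 * (n + 1) = (2 * n) + 1 + 1 := by omega
              rw [e1, hsucc2 p (2*n)]
            rw [h2]
            linarith
          · have htn' : t = n := by omega
            subst htn'
            rw [Finset.sum_range_succ]
            have hsplit := sum_range_even_odd p t
            have hP1 : ∑ i ∈ Finset.range (2 * (t+1)), p i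
                = ∑ i ∈ Finset.range (2 * t), p i + p (2*t) + p (2 * t + 1) := by
              have e1 : 2 * (t + 1) = (2 * t) + 1 + 1 := by omega
              rw [e1, hsucc2 p (2*t)]
            have h1 : p (2 * t + 1) ≤ p (2 * t) := hp (by omega)
            rw [hP1]
            linarith
      have h6 := H6 s hst
      have hp1 := hpre (2 * t)
      have hp2 := hpre (2 * s)
      have hq1 := hQmono (2 * t) (2 * t + 1) (by omega)
      have hq2 := hQmono (2 * s) (2 * s + 1) (by omega)
      nlinarith
  have hfin : d * (∑ i ∈ Finset.range (2 * s + 1), q i + ∑ i ∈ Finset.range (2 * t + 1), q i)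
      = 2 * (d * (q 0 + ∑ x ∈ Finset.range s, q (2 * x + 1)
          + ∑ x ∈ Finset.range t, q (2 * x + 2))) := by
    rw [H3 s, H4 t]; ring
  linarith

end Core


section MeasHelp

open MeasureTheory

lemma ratNat (q : ℚ) (N : ℕ) (h : q.den ∣ N) (hq : 0 ≤ q) : ∃ k : ℕ, (k : ℚ) = q * N := by
  refine ⟨q.num.toNat * (N / q.den), ?_⟩
  obtain ⟨c, hc⟩ := h
  subst hc
  rw [Nat.mul_div_cancel_left c q.den_pos]
  have h1 : (q.num.toNat : ℤ) = q.num := Int.toNat_of_nonneg (Rat.num_nonneg.mpr hq)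
  have h1' : ((q.num.toNat : ℕ) : ℚ) = ((q.num : ℤ) : ℚ) := by exact_mod_cast h1
  have h2 : q * q.den = q.num := Rat.mul_den_eq_num q
  push_cast
  rw [h1', ← mul_assoc, h2]

variable {α : Type*} [MeasurableSpace α] [MeasurableSingletonClass α]

lemma meas_finset (μ : Measure α) (A : Finset α) : μ ↑A = ∑ x ∈ A, μ {x} := by
  classical
  induction A using Finset.induction_on with
  | empty => simp
  | @insert a A ha ih =>
    rw [Finset.coe_insert, Finset.sum_insert ha]
    rw [Set.insert_eq, measure_union ?_ (A.finite_toSet.measurableSet), ih]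
    simp only [Set.disjoint_left, Set.mem_singleton_iff, Finset.mem_coe]
    rintro x rfl
    exact ha

lemma meas_null_of_atoms (μ : Measure α) {s : Set α} (hs : s.Countable)
    (h : ∀ x ∈ s, μ {x} = 0) : μ s = 0 := by
  have he : s = ⋃ x ∈ s, {x} := by simp
  rw [he]
  exact (measure_biUnion_null_iff hs).mpr h

end MeasHelp


section Rearrange

open MeasureTheory

lemma exists_rearrange (μ : Measure ℤ) [IsFiniteMeasure μ] (T : Finset ℤ)
    (hT : ∀ x ∉ T, μ {x} = 0) :
    ∃ f : ℤ ≃ ℤ, (∀ i j : ℕ, i ≤ j → μ {f (zenum j)} ≤ μ {f (zenum i)}) ∧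
      (∀ j : ℕ, T.card ≤ j → μ {f (zenum j)} = 0) := by
  classical
  set n := T.card with hn
  set e : Fin n ≃ {x // x ∈ T} := T.equivFin.symm with he
  set key : Fin n → ℝ := fun i => -(μ {(e i : ℤ)}).toReal with hkey
  set σ := Tuple.sort key with hσ
  set a : Fin n → ℤ := fun i => ((e (σ i)) : ℤ) with ha
  have ha_mem : ∀ i, a i ∈ T := fun i => (e (σ i)).2
  have ha_inj : Function.Injective a := by
    intro i j hij
    have : e (σ i) = e (σ j) := Subtype.ext hij
    exact σ.injective (e.injective this)
  have ha_sorted : ∀ i j : Fin n, i ≤ j → μ {a j} ≤ μ {a i} := by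
    intro i j hij
    have hm := Tuple.monotone_sort key hij
    simp only [Function.comp_apply, hkey] at hm
    have : (μ {a j}).toReal ≤ (μ {a i}).toReal := by
      simp only [ha]; linarith
    exact (ENNReal.toReal_le_toReal (measure_ne_top μ _) (measure_ne_top μ _)).mp this
  have ha_surj : ∀ y ∈ T, ∃ i : Fin n, a i = y := by
    intro y hy
    refine ⟨σ.symm (e.symm ⟨y, hy⟩), ?_⟩
    simp [ha]
  set D : Finset ℤ := (Finset.range n).image zenum with hD
  have hDcard : D.card = n := by
    rw [hD, Finset.card_image_of_injective _ zenum_injective, Finset.card_range]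
  have hDmem : ∀ x ∈ D, izenum x < n := by
    intro x hx
    rw [hD] at hx
    obtain ⟨i, hi, rfl⟩ := Finset.mem_image.mp hx
    rw [izenum_zenum]
    exact Finset.mem_range.mp hi
  have hDz : ∀ j : ℕ, j < n → zenum j ∈ D := by
    intro j hj
    exact Finset.mem_image.mpr ⟨j, Finset.mem_range.mpr hj, rfl⟩
  set U : Finset ℤ := D ∪ T with hU
  have hcards : (U \ D).card = (U \ T).card := by
    rw [Finset.card_sdiff_of_subset Finset.subset_union_left,
        Finset.card_sdiff_of_subset Finset.subset_union_right, hDcard]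
  set ψ : {x // x ∈ U \ D} ≃ {x // x ∈ U \ T} := Finset.equivOfCardEq hcards with hψ
  set F : ℤ → ℤ := fun x =>
    if hx : x ∈ D then a ⟨izenum x, hDmem x hx⟩
    else if hx2 : x ∈ U then (ψ ⟨x, Finset.mem_sdiff.mpr ⟨hx2, hx⟩⟩ : ℤ) else x
    with hF
  have hFD : ∀ (x) (hx : x ∈ D), F x = a ⟨izenum x, hDmem x hx⟩ := by
    intro x hx; simp only [hF, dif_pos hx]
  have hFUD : ∀ x, x ∈ U → (hx : x ∉ D) → F x ∈ U \ T := by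
    intro x hx2 hx
    simp only [hF, dif_neg hx, dif_pos hx2]
    exact (ψ ⟨x, Finset.mem_sdiff.mpr ⟨hx2, hx⟩⟩).2
  have hFO : ∀ x, x ∉ U → F x = x := by
    intro x hx
    have hxD : x ∉ D := fun h => hx (Finset.mem_union_left _ h)
    simp only [hF, dif_neg hxD, dif_neg hx]
  have hFT : ∀ (x) (hx : x ∈ D), F x ∈ T := by
    intro x hx; rw [hFD x hx]; exact ha_mem _
  have hinj : Function.Injective F := by
    intro x y hxy
    by_cases hx : x ∈ D <;> by_cases hy : y ∈ D
    · rw [hFD x hx, hFD y hy] at hxy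
      have := ha_inj hxy
      have h2 : izenum x = izenum y := by
        simpa using congrArg Fin.val this
      exact izenum_injective h2
    · by_cases hy2 : y ∈ U
      · have h1 := hFT x hx
        have h2 := hFUD y hy2 hy
        rw [hxy] at h1
        exact absurd h1 (Finset.mem_sdiff.mp h2).2
      · have h1 := hFT x hx
        rw [hFO y hy2] at hxy
        rw [hxy] at h1
        exact absurd (Finset.mem_union_right D h1) hy2
    · by_cases hx2 : x ∈ U
      · have h1 := hFT y hy
        have h2 := hFUD x hx2 hx
        rw [← hxy] at h1
        exact absurd h1 (Finset.mem_sdiff.mp h2).2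
      · have h1 := hFT y hy
        rw [hFO x hx2] at hxy
        rw [← hxy] at h1
        exact absurd (Finset.mem_union_right D h1) hx2
    · by_cases hx2 : x ∈ U <;> by_cases hy2 : y ∈ U
      · have e1 : F x = (ψ ⟨x, Finset.mem_sdiff.mpr ⟨hx2, hx⟩⟩ : ℤ) := by
          simp only [hF, dif_neg hx, dif_pos hx2]
        have e2 : F y = (ψ ⟨y, Finset.mem_sdiff.mpr ⟨hy2, hy⟩⟩ : ℤ) := by
          simp only [hF, dif_neg hy, dif_pos hy2]
        rw [e1, e2] at hxy
        have := ψ.injective (Subtype.ext hxy)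
        simpa using congrArg Subtype.val this
      · have h1 := hFUD x hx2 hx
        rw [hxy, hFO y hy2] at h1
        exact absurd ((Finset.mem_sdiff.mp h1).1) hy2
      · have h1 := hFUD y hy2 hy
        rw [← hxy, hFO x hx2] at h1
        exact absurd ((Finset.mem_sdiff.mp h1).1) hx2
      · rw [hFO x hx2, hFO y hy2] at hxy
        exact hxy
  have hsurj : Function.Surjective F := by
    intro y
    by_cases hy : y ∈ T
    · obtain ⟨i, hi⟩ := ha_surj y hy
      refine ⟨zenum i, ?_⟩
      have hz : zenum (i : ℕ) ∈ D := hDz i i.2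
      rw [hFD _ hz]
      rw [← hi]
      congr 1
      exact Fin.ext (by simp [izenum_zenum])
    · by_cases hy2 : y ∈ U
      · obtain ⟨u, hu⟩ := ψ.surjective ⟨y, Finset.mem_sdiff.mpr ⟨hy2, hy⟩⟩
        refine ⟨u.1, ?_⟩
        have hu1 := u.2
        have hx : u.1 ∉ D := (Finset.mem_sdiff.mp hu1).2
        have hx2 : u.1 ∈ U := (Finset.mem_sdiff.mp hu1).1
        have e1 : F u.1 = (ψ ⟨u.1, Finset.mem_sdiff.mpr ⟨hx2, hx⟩⟩ : ℤ) := by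
          simp only [hF, dif_neg hx, dif_pos hx2]
        rw [e1]
        have : (⟨u.1, Finset.mem_sdiff.mpr ⟨hx2, hx⟩⟩ : {x // x ∈ U \ D}) = u := Subtype.ext rfl
        rw [this, hu]
      · exact ⟨y, hFO y hy2⟩
  refine ⟨Equiv.ofBijective F ⟨hinj, hsurj⟩, ?_, ?_⟩
  · intro i j hij
    by_cases hj : j < n
    · have hi : i < n := lt_of_le_of_lt hij hj
      have hzi : zenum i ∈ D := hDz i hi
      have hzj : zenum j ∈ D := hDz j hj
      show μ {F (zenum j)} ≤ μ {F (zenum i)}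
      rw [hFD _ hzi, hFD _ hzj]
      have e1 : (⟨izenum (zenum i), hDmem _ hzi⟩ : Fin n) = ⟨i, by simpa [izenum_zenum] using hi⟩ :=
        Fin.ext (by simp [izenum_zenum])
      have e2 : (⟨izenum (zenum j), hDmem _ hzj⟩ : Fin n) = ⟨j, by simpa [izenum_zenum] using hj⟩ :=
        Fin.ext (by simp [izenum_zenum])
      rw [e1, e2]
      exact ha_sorted _ _ hij
    · -- j ≥ n : μ {F (zenum j)} = 0
      have h0 : μ {F (zenum j)} = 0 := by
        have hzj : zenum j ∉ D := by
          intro h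
          have := hDmem _ h
          rw [izenum_zenum] at this
          omega
        by_cases hz2 : zenum j ∈ U
        · have := hFUD _ hz2 hzj
          exact hT _ (Finset.mem_sdiff.mp this).2
        · rw [hFO _ hz2]
          exact hT _ (fun h => hz2 (Finset.mem_union_right D h))
      show μ {F (zenum j)} ≤ μ {F (zenum i)}
      rw [h0]
      exact zero_le
  · intro j hj
    have hjn : ¬ j < n := by omega
    have hzj : zenum j ∉ D := by
      intro h
      have := hDmem _ h
      rw [izenum_zenum] at this
      omega
    show μ {F (zenum j)} = 0
    by_cases hz2 : zenum j ∈ U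
    · have := hFUD _ hz2 hzj
      exact hT _ (Finset.mem_sdiff.mp this).2
    · rw [hFO _ hz2]
      exact hT _ (fun h => hz2 (Finset.mem_union_right D h))

end Rearrange


section QSide

open MeasureTheory

lemma step_down (μ' : Measure ℤ) (hsymm : ∀ i : ℤ, μ' {-i} = μ' {i})
    (m : ℤ) (h1 : ∀ i, m ≤ i → μ' {i + 1} ≤ μ' {i}) (h2 : ∀ i, i ≤ m → μ' {i - 1} ≤ μ' {i}) :
    ∀ x : ℤ, 0 ≤ x → μ' {x + 1} ≤ μ' {x} := by
  intro x hx
  rcases le_or_gt m x with h | h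
  · exact h1 x h
  · have hm : -x ≤ m := by omega
    have hstep := h2 (-x) hm
    calc μ' {x + 1} = μ' {-(x+1)} := (hsymm (x+1)).symm
    _ ≤ μ' {-x} := by
        have h3 : -(x+1) = -x - 1 := by ring
        rw [h3]; exact hstep
    _ = μ' {x} := hsymm x

lemma qe_antitone (μ' : Measure ℤ) (hsymm : ∀ i : ℤ, μ' {-i} = μ' {i})
    (m : ℤ) (h1 : ∀ i, m ≤ i → μ' {i + 1} ≤ μ' {i}) (h2 : ∀ i, i ≤ m → μ' {i - 1} ≤ μ' {i}) :
    Antitone (fun k : ℕ => μ' {zenum k}) := by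
  have hstep := step_down μ' hsymm m h1 h2
  apply antitone_nat_of_succ_le
  intro k
  rcases Nat.even_or_odd k with ⟨u, hu⟩ | ⟨u, hu⟩
  · have hk : k = 2 * u := by omega
    subst hk
    show μ' {zenum (2 * u + 1)} ≤ μ' {zenum (2 * u)}
    rw [zenum_odd u, zenum_even u, hsymm (u : ℤ)]
    exact hstep u (by positivity)
  · have hk2 : k = 2 * u + 1 := by omega
    subst hk2
    show μ' {zenum (2 * u + 1 + 1)} ≤ μ' {zenum (2 * u + 1)}
    have he : 2 * u + 1 + 1 = 2 * (u + 1) := by omega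
    rw [he, zenum_odd u, zenum_even (u + 1)]
    have : -(((u:ℕ) + 1 : ℕ) : ℤ) = -((u : ℤ) + 1) := by push_cast; ring
    rw [this, hsymm ((u : ℤ) + 1)]

lemma concQk_ge_finset (μ : Measure ℤ) [IsProbabilityMeasure μ] (A : Finset ℤ) :
    (μ ↑A).toReal ≤ concQk μ A.card := by
  apply le_csSup
  · refine ⟨1, ?_⟩
    rintro x ⟨B, hB, rfl⟩
    have : μ ↑B ≤ 1 := by
      rw [← measure_univ (μ := μ)]
      exact measure_mono (Set.subset_univ _)
    calc (μ ↑B).toReal ≤ (1 : ℝ≥0∞).toReal := ENNReal.toReal_mono (by simp) this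
    _ = 1 := by simp
  · exact ⟨A, rfl, rfl⟩

lemma concQk_le_sum (μ : Measure ℤ) [IsProbabilityMeasure μ] (q : ℕ → ℝ)
    (hq : Antitone q) (hqe : ∀ i, (μ {zenum i}).toReal = q i) (j : ℕ) :
    concQk μ j ≤ ∑ i ∈ Finset.range j, q i := by
  have hq0 : ∀ i, 0 ≤ q i := fun i => (hqe i) ▸ ENNReal.toReal_nonneg
  apply Real.sSup_le
  · rintro x ⟨A, hA, rfl⟩
    have h1 : μ ↑A = ∑ x ∈ A, μ {x} := meas_finset μ A
    have h2 : (μ ↑A).toReal = ∑ x ∈ A, (μ {x}).toReal := by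
      rw [h1, ENNReal.toReal_sum]
      intro a _
      exact measure_ne_top μ _
    rw [h2]
    have h3 : ∀ x ∈ A, (μ {x}).toReal = q (izenum x) := by
      intro x _
      rw [← hqe (izenum x), zenum_izenum]
    rw [Finset.sum_congr rfl h3]
    have h4 : ∑ x ∈ A, q (izenum x) = ∑ b ∈ A.image izenum, q b := by
      rw [Finset.sum_image (fun x _ y _ h => izenum_injective h)]
    rw [h4]
    have h5 := sum_finset_le_sum_range hq (A.image izenum)
    rwa [Finset.card_image_of_injective _ izenum_injective, hA] at h5
  · exact Finset.sum_nonneg fun i _ => hq0 i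

lemma sum_pos_part (p : ℕ → ℝ) (hp : Antitone p) (B : Finset ℤ) (hB : ∀ z ∈ B, 0 < z) :
    ∑ z ∈ B, p (izenum z) ≤ ∑ i ∈ Finset.range B.card, p (2 * i + 1) := by
  have h1 : ∀ z ∈ B, p (izenum z) = (fun k => p (2 * k + 1)) ((z - 1).toNat) := by
    intro z hz
    rw [izenum_odd_of_pos (hB z hz)]
  rw [Finset.sum_congr rfl h1]
  have hinj : ∀ x ∈ B, ∀ y ∈ B, (x - 1).toNat = (y - 1).toNat → x = y := by
    intro x hx y hy h
    have := hB x hx; have := hB y hy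
    omega
  rw [← Finset.sum_image (f := fun k => p (2 * k + 1)) hinj]
  have hcard : (B.image (fun z => (z - 1).toNat)).card = B.card :=
    Finset.card_image_of_injOn (fun x hx y hy h => hinj x hx y hy h)
  have := sum_finset_le_sum_range (u := fun k => p (2 * k + 1))
    (fun i j hij => hp (by omega)) (B.image (fun z => (z - 1).toNat))
  rwa [hcard] at this

lemma sum_nonpos_part (p : ℕ → ℝ) (hp : Antitone p) (B : Finset ℤ) (hB : ∀ z ∈ B, ¬ 0 < z) :
    ∑ z ∈ B, p (izenum z) ≤ ∑ i ∈ Finset.range B.card, p (2 * i) := by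
  have h1 : ∀ z ∈ B, p (izenum z) = (fun k => p (2 * k)) ((-z).toNat) := by
    intro z hz
    rw [izenum_even_of_nonpos (hB z hz)]
  rw [Finset.sum_congr rfl h1]
  have hinj : ∀ x ∈ B, ∀ y ∈ B, (-x).toNat = (-y).toNat → x = y := by
    intro x hx y hy h
    have := hB x hx; have := hB y hy
    omega
  rw [← Finset.sum_image (f := fun k => p (2 * k)) hinj]
  have hcard : (B.image (fun z => (-z).toNat)).card = B.card :=
    Finset.card_image_of_injOn (fun x hx y hy h => hinj x hx y hy h)
  have := sum_finset_le_sum_range (u := fun k => p (2 * k))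
    (fun i j hij => hp (by omega)) (B.image (fun z => (-z).toNat))
  rwa [hcard] at this

/-- The allowed values of `X'` given `Z = z`. -/
noncomputable def goodF (z : ℤ) : Finset ℤ := Finset.Icc 0 z ∪ Finset.Icc (z - 1) 0

lemma zero_mem_goodF (z : ℤ) : (0 : ℤ) ∈ goodF z := by
  unfold goodF
  rcases le_or_gt 0 z with h | h
  · exact Finset.mem_union_left _ (Finset.mem_Icc.mpr ⟨le_refl 0, h⟩)
  · exact Finset.mem_union_right _ (Finset.mem_Icc.mpr ⟨by omega, le_refl 0⟩)

lemma hall_real (p q : ℕ → ℝ) (d : ℝ) (rν rμ' : ℤ → ℝ)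
    (hpν : ∀ z, rν z = p (izenum z)) (hqμ : ∀ x, rμ' x = q (izenum x))
    (hp : Antitone p) (hq0 : ∀ i, 0 ≤ q i)
    (hpair : ∀ x, q (2 * x + 2) = q (2 * x + 1)) (hd : 0 ≤ d)
    (hpre : ∀ j, ∑ i ∈ Finset.range j, p i ≤ d * ∑ i ∈ Finset.range j, q i)
    (B : Finset ℤ) (hBne : B.Nonempty) :
    ∑ z ∈ B, rν z ≤ d * ∑ x ∈ B.biUnion goodF, rμ' x := by
  classical
  set Bp := B.filter (fun z => 0 < z) with hBp
  set Bn := B.filter (fun z => ¬ 0 < z) with hBn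
  set s := Bp.card with hs
  set t := Bn.card with ht
  have hsplit : ∑ z ∈ B, rν z = ∑ z ∈ Bp, rν z + ∑ z ∈ Bn, rν z :=
    (Finset.sum_filter_add_sum_filter_not B _ _).symm
  have hb1 : ∑ z ∈ Bp, rν z ≤ ∑ i ∈ Finset.range s, p (2 * i + 1) := by
    rw [Finset.sum_congr rfl (fun z _ => hpν z)]
    exact sum_pos_part p hp Bp (fun z hz => (Finset.mem_filter.mp hz).2)
  have hb2 : ∑ z ∈ Bn, rν z ≤ ∑ i ∈ Finset.range t, p (2 * i) := by
    rw [Finset.sum_congr rfl (fun z _ => hpν z)]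
    exact sum_nonpos_part p hp Bn (fun z hz => (Finset.mem_filter.mp hz).2)
  have hcore := core_ineq p q d hp hq0 hpair hd hpre s t
  -- now the RHS comparison
  set posP : Finset ℤ := (Finset.range s).image (fun i : ℕ => (i : ℤ) + 1) with hposP
  set negP : Finset ℤ := (Finset.range t).image (fun i : ℕ => -(i : ℤ) - 1) with hnegP
  set Lset : Finset ℤ := insert 0 (posP ∪ negP) with hLset
  have hsum_pos : ∑ x ∈ posP, rμ' x = ∑ i ∈ Finset.range s, q (2 * i + 1) := by
    rw [hposP, Finset.sum_image (by intro x _ y _ h; simp only at h; omega)]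
    apply Finset.sum_congr rfl
    intro i _
    rw [hqμ, izenum_odd_of_pos (by omega)]
    congr 2
    omega
  have hsum_neg : ∑ x ∈ negP, rμ' x = ∑ i ∈ Finset.range t, q (2 * i + 2) := by
    rw [hnegP, Finset.sum_image (by intro x _ y _ h; simp only at h; omega)]
    apply Finset.sum_congr rfl
    intro i _
    rw [hqμ, izenum_even_of_nonpos (by omega)]
    congr 1
    omega
  have h0q : rμ' 0 = q 0 := by
    rw [hqμ]
    norm_num [izenum]
  have hdisj : Disjoint posP negP := by
    rw [Finset.disjoint_left]
    intro x hx hx2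
    rw [hposP] at hx; rw [hnegP] at hx2
    obtain ⟨i, _, rfl⟩ := Finset.mem_image.mp hx
    obtain ⟨j, _, hj⟩ := Finset.mem_image.mp hx2
    omega
  have h0nm : (0 : ℤ) ∉ posP ∪ negP := by
    intro h
    rcases Finset.mem_union.mp h with h | h
    · obtain ⟨i, _, hi⟩ := Finset.mem_image.mp h; omega
    · obtain ⟨i, _, hi⟩ := Finset.mem_image.mp h; omega
  have hsumL : ∑ x ∈ Lset, rμ' x
      = q 0 + ∑ i ∈ Finset.range s, q (2 * i + 1) + ∑ i ∈ Finset.range t, q (2 * i + 2) := by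
    rw [hLset, Finset.sum_insert h0nm, Finset.sum_union hdisj, hsum_pos, hsum_neg, h0q]
    ring
  have hLsub : Lset ⊆ B.biUnion goodF := by
    intro x hx
    rw [hLset] at hx
    rcases Finset.mem_insert.mp hx with rfl | hx
    · obtain ⟨z₀, hz₀⟩ := hBne
      exact Finset.mem_biUnion.mpr ⟨z₀, hz₀, zero_mem_goodF z₀⟩
    rcases Finset.mem_union.mp hx with hx | hx
    · obtain ⟨i, hi, rfl⟩ := Finset.mem_image.mp hx
      have hi' : i < s := Finset.mem_range.mp hi
      have hBpne : Bp.Nonempty := Finset.card_pos.mp (by omega)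
      set A := Bp.max' hBpne with hA
      have hAB : A ∈ Bp := Bp.max'_mem hBpne
      have hApos : 0 < A := (Finset.mem_filter.mp hAB).2
      have hsub : Bp ⊆ Finset.Icc 1 A := by
        intro z hz
        refine Finset.mem_Icc.mpr ⟨(Finset.mem_filter.mp hz).2, Bp.le_max' z hz⟩
      have hcard : s ≤ A.toNat := by
        have := Finset.card_le_card hsub
        rw [Int.card_Icc] at this
        omega
      refine Finset.mem_biUnion.mpr ⟨A, (Finset.mem_filter.mp hAB).1, ?_⟩
      apply Finset.mem_union_left
      refine Finset.mem_Icc.mpr ⟨by omega, by omega⟩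
    · obtain ⟨i, hi, rfl⟩ := Finset.mem_image.mp hx
      have hi' : i < t := Finset.mem_range.mp hi
      have hBnne : Bn.Nonempty := Finset.card_pos.mp (by omega)
      set b := Bn.min' hBnne with hb
      have hbB : b ∈ Bn := Bn.min'_mem hBnne
      have hbnp : ¬ 0 < b := (Finset.mem_filter.mp hbB).2
      have hsub : Bn ⊆ Finset.Icc b 0 := by
        intro z hz
        refine Finset.mem_Icc.mpr ⟨Bn.min'_le z hz, by
          have := (Finset.mem_filter.mp hz).2; omega⟩
      have hcard : t ≤ (1 - b).toNat := by
        have := Finset.card_le_card hsub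
        rw [Int.card_Icc] at this
        omega
      refine Finset.mem_biUnion.mpr ⟨b, (Finset.mem_filter.mp hbB).1, ?_⟩
      apply Finset.mem_union_right
      refine Finset.mem_Icc.mpr ⟨by omega, by omega⟩
  have hmono : ∑ x ∈ Lset, rμ' x ≤ ∑ x ∈ B.biUnion goodF, rμ' x := by
    apply Finset.sum_le_sum_of_subset_of_nonneg hLsub
    intro x _ _
    rw [hqμ]
    exact hq0 _
  calc ∑ z ∈ B, rν z = ∑ z ∈ Bp, rν z + ∑ z ∈ Bn, rν z := hsplit
  _ ≤ ∑ i ∈ Finset.range s, p (2 * i + 1) + ∑ i ∈ Finset.range t, p (2 * i) := by linarith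
  _ ≤ d * (q 0 + ∑ x ∈ Finset.range s, q (2 * x + 1) + ∑ x ∈ Finset.range t, q (2 * x + 2)) := hcore
  _ = d * ∑ x ∈ Lset, rμ' x := by rw [hsumL]
  _ ≤ d * ∑ x ∈ B.biUnion goodF, rμ' x := by
      apply mul_le_mul_of_nonneg_left hmono hd

end QSide

section PiConstruction

open MeasureTheory

lemma meas_all {α : Type*} [MeasurableSpace α] [MeasurableSingletonClass α] [Countable α]
    (s : Set α) : MeasurableSet s := (Set.to_countable s).measurableSet

lemma exists_pi (ν μ' : Measure ℤ) [IsProbabilityMeasure ν] [IsProbabilityMeasure μ']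
    (rν rμ' : ℤ → ℚ)
    (hrν : ∀ z, ν {z} = ENNReal.ofReal ((rν z : ℝ))) (hrν0 : ∀ z, 0 ≤ rν z)
    (hrμ' : ∀ x, μ' {x} = ENNReal.ofReal ((rμ' x : ℝ))) (hrμ0 : ∀ x, 0 ≤ rμ' x)
    (Sν : Finset ℤ) (hSν : ∀ z ∉ Sν, rν z = 0)
    (dq : ℚ) (hdq : 0 ≤ dq)
    (hhall : ∀ B : Finset ℤ, B ⊆ Sν → B.Nonempty →
      ∑ z ∈ B, (rν z : ℝ) ≤ (dq : ℝ) * ∑ x ∈ B.biUnion goodF, (rμ' x : ℝ)) :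
    ∃ π : Measure (ℤ × ℤ), IsProbabilityMeasure π ∧ Measure.map Prod.fst π = ν ∧
      (∀ x : ℤ, Measure.map Prod.snd π {x} ≤ ENNReal.ofReal ((dq : ℝ)) * μ' {x}) ∧
      π {p : ℤ × ℤ | p.2 ∉ goodF p.1} = 0 := by
  classical
  set W : Finset ℤ := Sν.biUnion goodF with hW
  set N : ℕ := (∏ z ∈ Sν, (rν z).den) * (∏ x ∈ W, (dq * rμ' x).den) with hN
  have hNpos : 0 < N := by
    apply Nat.mul_pos
    · exact Finset.prod_pos fun i _ => (rν i).den_pos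
    · exact Finset.prod_pos fun i _ => (dq * rμ' i).den_pos
  -- integer counts
  have hcnt : ∀ z ∈ Sν, ∃ k : ℕ, (k : ℚ) = rν z * N := by
    intro z hz
    apply ratNat _ _ _ (hrν0 z)
    exact Dvd.dvd.mul_right (Finset.dvd_prod_of_mem _ hz) _
  have hcap : ∀ x ∈ W, ∃ k : ℕ, (k : ℚ) = dq * rμ' x * N := by
    intro x hx
    apply ratNat _ _ _ (mul_nonneg hdq (hrμ0 x))
    exact Dvd.dvd.mul_left (Finset.dvd_prod_of_mem _ hx) _
  set cnt : ℤ → ℕ := fun z => if hz : z ∈ Sν then (hcnt z hz).choose else 0 with hcntdef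
  set cap : ℤ → ℕ := fun x => if hx : x ∈ W then (hcap x hx).choose else 0 with hcapdef
  have hcnt' : ∀ z ∈ Sν, (cnt z : ℚ) = rν z * N := by
    intro z hz
    simp only [hcntdef, dif_pos hz]
    exact (hcnt z hz).choose_spec
  have hcap' : ∀ x ∈ W, (cap x : ℚ) = dq * rμ' x * N := by
    intro x hx
    simp only [hcapdef, dif_pos hx]
    exact (hcap x hx).choose_spec
  set Lu : Finset (ℤ × ℕ) := Sν.biUnion (fun z => {z} ×ˢ Finset.range (cnt z)) with hLu
  have hLumem : ∀ w : ℤ × ℕ, w ∈ Lu ↔ (w.1 ∈ Sν ∧ w.2 < cnt w.1) := by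
    intro w
    simp only [hLu, Finset.mem_biUnion, Finset.mem_product, Finset.mem_singleton,
      Finset.mem_range]
    constructor
    · rintro ⟨z, hz, rfl, h2⟩
      exact ⟨hz, h2⟩
    · rintro ⟨h1, h2⟩
      exact ⟨w.1, h1, rfl, h2⟩
  have hprodmem : ∀ (x : ℤ) (k c : ℕ) (w : ℤ × ℕ), w.1 = x → w.2 < c →
      w ∈ ({x} : Finset ℤ) ×ˢ Finset.range c := by
    intro x k c w h1 h2
    exact Finset.mem_product.mpr ⟨Finset.mem_singleton.mpr h1, Finset.mem_range.mpr h2⟩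
  set tfun : {u // u ∈ Lu} → Finset (ℤ × ℕ) :=
    fun u => (goodF u.1.1).biUnion (fun x => {x} ×ˢ Finset.range (cap x)) with htfun
  have htmem : ∀ (u : {u // u ∈ Lu}) (w : ℤ × ℕ), w ∈ tfun u ↔
      (w.1 ∈ goodF u.1.1 ∧ w.2 < cap w.1) := by
    intro u w
    simp only [htfun, Finset.mem_biUnion, Finset.mem_product, Finset.mem_singleton,
      Finset.mem_range]
    constructor
    · rintro ⟨x, hx, rfl, h2⟩
      exact ⟨hx, h2⟩
    · rintro ⟨h1, h2⟩
      exact ⟨w.1, h1, rfl, h2⟩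
  -- sums of counts over finsets of `ℤ`
  have hsum_cnt : ∀ B : Finset ℤ, B ⊆ Sν →
      ((∑ z ∈ B, cnt z : ℕ) : ℚ) = (∑ z ∈ B, rν z) * N := by
    intro B hB
    push_cast
    rw [Finset.sum_mul]
    exact Finset.sum_congr rfl (fun z hz => hcnt' z (hB hz))
  have hsum_cap : ∀ U : Finset ℤ, U ⊆ W →
      ((∑ x ∈ U, cap x : ℕ) : ℚ) = dq * (∑ x ∈ U, rμ' x) * N := by
    intro U hU
    push_cast
    calc ∑ x ∈ U, ((cap x : ℕ) : ℚ) = ∑ x ∈ U, dq * rμ' x * N :=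
          Finset.sum_congr rfl (fun x hx => hcap' x (hU hx))
    _ = dq * (∑ x ∈ U, rμ' x) * N := by rw [← Finset.sum_mul, ← Finset.mul_sum]
  -- Hall's condition
  have hHall : ∀ S : Finset {u // u ∈ Lu}, S.card ≤ (S.biUnion tfun).card := by
    intro S
    rcases S.eq_empty_or_nonempty with rfl | hSne
    · simp
    set B : Finset ℤ := S.image (fun u => u.1.1) with hB
    have hBne : B.Nonempty := hSne.image _
    have hBsub : B ⊆ Sν := by
      intro z hz
      obtain ⟨u, _, rfl⟩ := Finset.mem_image.mp hz
      exact ((hLumem u.1).mp u.2).1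
    set U : Finset ℤ := B.biUnion goodF with hU
    have hUW : U ⊆ W := by
      intro x hx
      obtain ⟨z, hz, hx2⟩ := Finset.mem_biUnion.mp hx
      exact Finset.mem_biUnion.mpr ⟨z, hBsub hz, hx2⟩
    -- identify the target
    have hbi : S.biUnion tfun = U.biUnion (fun x => {x} ×ˢ Finset.range (cap x)) := by
      ext w
      simp only [Finset.mem_biUnion]
      constructor
      · rintro ⟨u, hu, hw⟩
        obtain ⟨h1, h2⟩ := (htmem u w).mp hw
        refine ⟨w.1, ?_, ?_⟩
        · exact Finset.mem_biUnion.mpr ⟨u.1.1, Finset.mem_image.mpr ⟨u, hu, rfl⟩, h1⟩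
        · exact hprodmem w.1 0 _ w rfl h2
      · rintro ⟨x, hx, hw⟩
        have hw0 := Finset.mem_product.mp hw
        have hw1 : w.1 = x ∧ w.2 < cap x :=
          ⟨Finset.mem_singleton.mp hw0.1, Finset.mem_range.mp hw0.2⟩
        obtain ⟨z, hz, hxg⟩ := Finset.mem_biUnion.mp hx
        obtain ⟨u, hu, rfl⟩ := Finset.mem_image.mp hz
        refine ⟨u, hu, (htmem u w).mpr ⟨?_, ?_⟩⟩
        · rw [hw1.1]; exact hxg
        · rw [hw1.1]; exact hw1.2
    have hcardU : (U.biUnion (fun x => {x} ×ˢ Finset.range (cap x))).card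
        = ∑ x ∈ U, cap x := by
      rw [Finset.card_biUnion]
      · apply Finset.sum_congr rfl
        intro x _
        simp
      · intro x _ y _ hxy
        simp only [Finset.disjoint_left, Finset.mem_product, Finset.mem_singleton]
        rintro w ⟨rfl, _⟩ ⟨h, _⟩
        exact hxy h
    -- bound S.card
    have hScard : S.card ≤ ∑ z ∈ B, cnt z := by
      have h1 : S.card = (S.image Subtype.val).card :=
        (Finset.card_image_of_injective _ Subtype.val_injective).symm
      rw [h1]
      have h2 : S.image Subtype.val ⊆ B.biUnion (fun z => {z} ×ˢ Finset.range (cnt z)) := by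
        intro w hw
        obtain ⟨u, hu, rfl⟩ := Finset.mem_image.mp hw
        have := (hLumem u.1).mp u.2
        refine Finset.mem_biUnion.mpr ⟨u.1.1, Finset.mem_image.mpr ⟨u, hu, rfl⟩, ?_⟩
        exact hprodmem u.1.1 0 _ u.1 rfl this.2
      calc (S.image Subtype.val).card
          ≤ (B.biUnion (fun z => {z} ×ˢ Finset.range (cnt z))).card := Finset.card_le_card h2
      _ = ∑ z ∈ B, cnt z := by
          rw [Finset.card_biUnion]
          · apply Finset.sum_congr rfl; intro x _; simp
          · intro x _ y _ hxy
            simp only [Finset.disjoint_left, Finset.mem_product, Finset.mem_singleton]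
            rintro w ⟨rfl, _⟩ ⟨h, _⟩
            exact hxy h
    -- the numeric inequality
    have hnum : ∑ z ∈ B, cnt z ≤ ∑ x ∈ U, cap x := by
      have hq : ((∑ z ∈ B, cnt z : ℕ) : ℚ) ≤ ((∑ x ∈ U, cap x : ℕ) : ℚ) := by
        rw [hsum_cnt B hBsub, hsum_cap U hUW]
        have hre : (∑ z ∈ B, rν z : ℚ) ≤ dq * ∑ x ∈ U, rμ' x := by
          have := hhall B hBsub hBne
          have hcast : ((∑ z ∈ B, rν z : ℚ) : ℝ) ≤ ((dq * ∑ x ∈ U, rμ' x : ℚ) : ℝ) := by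
            push_cast
            convert this using 2
          exact_mod_cast hcast
        have hN0 : (0 : ℚ) ≤ N := by positivity
        calc (∑ z ∈ B, rν z) * N ≤ (dq * ∑ x ∈ U, rμ' x) * N := by
              apply mul_le_mul_of_nonneg_right hre hN0
        _ = dq * (∑ x ∈ U, rμ' x) * N := by ring
      exact_mod_cast hq
    calc S.card ≤ ∑ z ∈ B, cnt z := hScard
    _ ≤ ∑ x ∈ U, cap x := hnum
    _ = (U.biUnion (fun x => {x} ×ˢ Finset.range (cap x))).card := hcardU.symm
    _ = (S.biUnion tfun).card := by rw [hbi]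
  obtain ⟨F, hFinj, hFmem⟩ :=
    (Finset.all_card_le_biUnion_card_iff_exists_injective tfun).mp hHall
  -- the coupling measure
  set pt : {u // u ∈ Lu} → ℤ × ℤ := fun u => (u.1.1, (F u).1) with hpt
  set π : Measure (ℤ × ℤ) :=
    ((N : ℝ≥0∞))⁻¹ • ∑ u ∈ Lu.attach, Measure.dirac (pt u) with hπ
  have hNne0 : ((N : ℝ≥0∞)) ≠ 0 := by
    simp only [ne_eq, Nat.cast_eq_zero]
    omega
  have hNnetop : ((N : ℝ≥0∞)) ≠ ⊤ := by simp
  -- counting formula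
  have hπs : ∀ (s : Set (ℤ × ℤ)) (P : {u // u ∈ Lu} → Prop) [DecidablePred P],
      (∀ u, P u ↔ pt u ∈ s) →
      π s = ((N : ℝ≥0∞))⁻¹ * ((Lu.attach.filter P).card : ℝ≥0∞) := by
    intro s P instP hiff
    rw [hπ, Measure.smul_apply, Measure.finset_sum_apply]
    congr 1
    rw [← Finset.sum_boole]
    apply Finset.sum_congr rfl
    intro u _
    rw [Measure.dirac_apply' _ (meas_all s)]
    simp only [Set.indicator_apply, Pi.one_apply]
    by_cases h : P u
    · rw [if_pos h, if_pos ((hiff u).mp h)]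
    · rw [if_neg h, if_neg (fun hc => h ((hiff u).mpr hc))]
  -- transfer filtered-attach cardinalities to filters on `Lu`
  have hfidx : ∀ (P : ℤ × ℕ → Prop) [DecidablePred P],
      (Lu.attach.filter (fun u => P u.1)).card = (Lu.filter P).card := by
    intro P _
    apply Finset.card_bij (fun u _ => u.1)
    · intro a ha
      rw [Finset.mem_filter] at ha ⊢
      exact ⟨a.2, ha.2⟩
    · intro a _ b _ hab
      exact Subtype.ext hab
    · intro b hb
      rw [Finset.mem_filter] at hb
      exact ⟨⟨b, hb.1⟩, Finset.mem_filter.mpr ⟨Finset.mem_attach _ _, hb.2⟩, rfl⟩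
  -- first marginal
  have hfst : Measure.map Prod.fst π = ν := by
    apply Measure.ext_of_singleton
    intro z
    rw [Measure.map_apply measurable_fst (meas_all _),
      hπs (Prod.fst ⁻¹' {z}) (fun u => u.1.1 = z) (fun u => by simp [hpt]), hrν]
    have hfc := hfidx (fun w => w.1 = z)
    rw [hfc]
    by_cases hz : z ∈ Sν
    · have hflt : Lu.filter (fun w => w.1 = z) = ({z} : Finset ℤ) ×ˢ Finset.range (cnt z) := by
        ext w
        rw [Finset.mem_filter, hLumem w, Finset.mem_product, Finset.mem_singleton,
          Finset.mem_range]
        constructor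
        · rintro ⟨⟨_, h2⟩, rfl⟩
          exact ⟨rfl, h2⟩
        · rintro ⟨rfl, h2⟩
          exact ⟨⟨hz, h2⟩, rfl⟩
      rw [hflt]
      have hcard : (({z} : Finset ℤ) ×ˢ Finset.range (cnt z)).card = cnt z := by simp
      rw [hcard]
      have hc : ((cnt z : ℕ) : ℝ) = (rν z : ℝ) * (N : ℝ) := by exact_mod_cast hcnt' z hz
      have he : ((cnt z : ℕ) : ℝ≥0∞) = ENNReal.ofReal ((rν z : ℝ)) * (N : ℝ≥0∞) := by
        rw [← ENNReal.ofReal_natCast, hc, ENNReal.ofReal_mul (by exact_mod_cast hrν0 z),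
          ENNReal.ofReal_natCast]
      rw [he, mul_comm (ENNReal.ofReal _) ((N : ℝ≥0∞)), ← mul_assoc,
        ENNReal.inv_mul_cancel hNne0 hNnetop, one_mul]
    · have hflt : Lu.filter (fun w => w.1 = z) = ∅ := by
        apply Finset.filter_eq_empty_iff.mpr
        intro w hw
        intro hc
        exact hz (hc ▸ ((hLumem w).mp hw).1)
      rw [hflt, hSν z hz]
      simp
  -- total mass
  have hsum1 : (∑ z ∈ Sν, rν z : ℚ) = 1 := by
    have h1 : ν (↑Sν)ᶜ = 0 := by
      apply meas_null_of_atoms _ (Set.to_countable _)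
      intro x hx
      rw [hrν x, hSν x (by simpa using hx)]
      simp
    have h2 : ν ↑Sν = 1 := by
      have := measure_add_measure_compl (μ := ν) (meas_all (↑Sν : Set ℤ))
      rw [h1, add_zero] at this
      rw [this, measure_univ]
    rw [meas_finset] at h2
    have h3 : ∑ x ∈ Sν, ν {x} = ENNReal.ofReal (∑ z ∈ Sν, (rν z : ℝ)) := by
      rw [ENNReal.ofReal_sum_of_nonneg (fun i _ => by exact_mod_cast hrν0 i)]
      exact Finset.sum_congr rfl (fun z _ => hrν z)
    rw [h3] at h2
    have h4 : (∑ z ∈ Sν, (rν z : ℝ)) = 1 := by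
      have h5 : (0:ℝ) ≤ ∑ z ∈ Sν, (rν z : ℝ) :=
        Finset.sum_nonneg (fun z _ => by exact_mod_cast hrν0 z)
      have := congrArg ENNReal.toReal h2
      rwa [ENNReal.toReal_ofReal h5, ENNReal.toReal_one] at this
    exact_mod_cast h4
  have hLucard : Lu.card = N := by
    have h1 : Lu.card = ∑ z ∈ Sν, cnt z := by
      rw [hLu, Finset.card_biUnion]
      · exact Finset.sum_congr rfl (fun z _ => by simp)
      · intro x _ y _ hxy
        simp only [Finset.disjoint_left, Finset.mem_product, Finset.mem_singleton,
          Finset.mem_range]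
        rintro w ⟨rfl, _⟩ ⟨h, _⟩
        exact hxy h
    have h2 : ((∑ z ∈ Sν, cnt z : ℕ) : ℚ) = ((N : ℕ) : ℚ) := by
      rw [hsum_cnt Sν (subset_refl _), hsum1, one_mul]
    have h3 : ∑ z ∈ Sν, cnt z = N := by exact_mod_cast h2
    rw [h1, h3]
  have hprob : IsProbabilityMeasure π := by
    constructor
    rw [hπs Set.univ (fun _ => True) (fun u => by simp)]
    rw [Finset.filter_true, Finset.card_attach, hLucard,
      ENNReal.inv_mul_cancel hNne0 hNnetop]
  -- second marginal bound
  have hsnd : ∀ x : ℤ, Measure.map Prod.snd π {x} ≤ ENNReal.ofReal ((dq : ℝ)) * μ' {x} := by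
    intro x
    rw [Measure.map_apply measurable_snd (meas_all _),
      hπs (Prod.snd ⁻¹' {x}) (fun u => (F u).1 = x) (fun u => by simp [hpt])]
    have hcard : (Lu.attach.filter (fun u => (F u).1 = x)).card ≤ cap x := by
      have hinj := Finset.card_le_card_of_injOn (fun u => (F u).2)
        (t := Finset.range (cap x)) (s := Lu.attach.filter (fun u => (F u).1 = x)) ?_ ?_
      · simpa using hinj
      · intro u hu
        rw [Finset.mem_coe, Finset.mem_filter] at hu
        have hx1 : (F u).1 = x := hu.2
        have := (htmem u (F u)).mp (hFmem u)
        rw [Finset.mem_coe, Finset.mem_range, ← hx1]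
        exact this.2
      · intro u hu v hv huv
        simp only [Finset.coe_filter, Set.mem_setOf_eq] at hu hv
        have hx1 : (F u).1 = x := hu.2
        have hx2 : (F v).1 = x := hv.2
        apply hFinj
        exact Prod.ext (hx1.trans hx2.symm) huv
    by_cases hx : x ∈ W
    · have hcx : ((cap x : ℕ) : ℝ) = (dq : ℝ) * (rμ' x : ℝ) * (N : ℝ) := by
        exact_mod_cast hcap' x hx
      have he : ((cap x : ℕ) : ℝ≥0∞)
          = ENNReal.ofReal ((dq : ℝ)) * ENNReal.ofReal ((rμ' x : ℝ)) * (N : ℝ≥0∞) := by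
        rw [← ENNReal.ofReal_natCast, hcx]
        have hnn1 : (0:ℝ) ≤ (dq : ℝ) * (rμ' x : ℝ) :=
          mul_nonneg (by exact_mod_cast hdq) (by exact_mod_cast hrμ0 x)
        rw [ENNReal.ofReal_mul hnn1, ENNReal.ofReal_mul (by exact_mod_cast hdq),
          ENNReal.ofReal_natCast]
      calc (N : ℝ≥0∞)⁻¹ * ((Lu.attach.filter (fun u => (F u).1 = x)).card : ℝ≥0∞)
          ≤ (N : ℝ≥0∞)⁻¹ * ((cap x : ℕ) : ℝ≥0∞) := by
            apply mul_le_mul_right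
            exact_mod_cast hcard
      _ = ENNReal.ofReal ((dq : ℝ)) * μ' {x} := by
          rw [he, hrμ' x, mul_comm (ENNReal.ofReal (dq:ℝ) * ENNReal.ofReal _) ((N : ℝ≥0∞)),
            ← mul_assoc, ENNReal.inv_mul_cancel hNne0 hNnetop, one_mul]
    · -- x outside the window: the filter is empty
      have hflt : Lu.attach.filter (fun u => (F u).1 = x) = ∅ := by
        apply Finset.filter_eq_empty_iff.mpr
        intro u _
        intro hx1
        have hgood := ((htmem u (F u)).mp (hFmem u)).1
        apply hx
        refine Finset.mem_biUnion.mpr ⟨u.1.1, ((hLumem u.1).mp u.2).1, ?_⟩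
        rwa [hx1] at hgood
      rw [hflt]
      simp
  -- good support
  have hgood : π {p : ℤ × ℤ | p.2 ∉ goodF p.1} = 0 := by
    rw [hπs {p : ℤ × ℤ | p.2 ∉ goodF p.1} (fun u => (F u).1 ∉ goodF u.1.1)
      (fun u => by simp [hpt])]
    rw [Finset.filter_false_of_mem (fun u _ => not_not_intro ((htmem u (F u)).mp (hFmem u)).1)]
    simp
  exact ⟨π, hprob, hfst, hsnd, hgood⟩

end PiConstruction

section Assembly

open MeasureTheory ProbabilityTheory

lemma ofReal_rat_max (q : ℚ) : ENNReal.ofReal ((q : ℝ)) = ENNReal.ofReal ((max 0 q : ℚ) : ℝ) := by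
  rcases le_total 0 q with h | h
  · rw [max_eq_right h]
  · rw [max_eq_left h]
    rw [ENNReal.ofReal_of_nonpos (by exact_mod_cast h)]
    simp

end Assembly

end St12

theorem statement12' (μ μ' : MeasureTheory.Measure ℤ)
    (hμ : MeasureTheory.IsProbabilityMeasure μ)
    (hμ' : MeasureTheory.IsProbabilityMeasure μ')
    (hfin : ∃ s : Finset ℤ, ∀ x ∉ s, μ {x} = 0)
    (hfin' : ∃ s : Finset ℤ, ∀ x ∉ s, μ' {x} = 0)
    (hrat : ∀ x : ℤ, ∃ q : ℚ, μ {x} = ENNReal.ofReal (q : ℝ))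
    (hrat' : ∀ x : ℤ, ∃ q : ℚ, μ' {x} = ENNReal.ofReal (q : ℝ))
    (hsymm : IsSymmetricZ μ') (huni : IsUnimodal μ')
    (ε : ℝ) (hε : 0 ≤ ε) (hdom : EpsDom ε μ μ') :
    ∃ ν : MeasureTheory.Measure ℤ, IsPlusRearrangement μ ν ∧
      Nonempty (PlusCoupling ν μ' ε) := by
  classical
  open St12 in
  obtain ⟨T, hT⟩ := hfin
  obtain ⟨T', hT'⟩ := hfin'
  obtain ⟨m, hm1, hm2⟩ := huni
  obtain ⟨f, hfsort, hfzero⟩ := St12.exists_rearrange μ T hT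
  set ν : MeasureTheory.Measure ℤ := MeasureTheory.Measure.map f.symm μ with hν
  have hmeasall := fun s => St12.meas_all (α := ℤ) s
  have hνs : ∀ x : ℤ, ν {x} = μ {f x} := by
    intro x
    rw [hν, MeasureTheory.Measure.map_apply (measurable_of_countable _) (St12.meas_all _)]
    congr 1
    ext y
    simp [Equiv.symm_apply_eq]
  have hνprob : MeasureTheory.IsProbabilityMeasure ν :=
    MeasureTheory.Measure.isProbabilityMeasure_map (measurable_of_countable _).aemeasurable
  have hrearr : IsPlusRearrangement μ ν := by
    constructor
    · exact ⟨f, hνs⟩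
    · intro a b hab
      rw [hνs, hνs]
      exact hfsort a b hab
  refine ⟨ν, hrearr, ?_⟩
  -- rational atom functions
  set rν : ℤ → ℚ := fun z => max 0 (hrat (f z)).choose with hrνdef
  set rμ : ℤ → ℚ := fun x => max 0 (hrat' x).choose with hrμdef
  have hrν0 : ∀ z, 0 ≤ rν z := fun z => le_max_left _ _
  have hrμ0 : ∀ x, 0 ≤ rμ x := fun x => le_max_left _ _
  have hrνval : ∀ z, ν {z} = ENNReal.ofReal ((rν z : ℝ)) := by
    intro z
    rw [hνs, (hrat (f z)).choose_spec, St12.ofReal_rat_max]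
  have hrμval : ∀ x, μ' {x} = ENNReal.ofReal ((rμ x : ℝ)) := by
    intro x
    rw [(hrat' x).choose_spec, St12.ofReal_rat_max]
  -- real sequences along zenum
  set p : ℕ → ℝ := fun i => ((rν (zenum i) : ℝ)) with hpdef
  set q : ℕ → ℝ := fun i => ((rμ (zenum i) : ℝ)) with hqdef
  have hptoReal : ∀ i, p i = (ν {zenum i}).toReal := by
    intro i
    rw [hrνval, ENNReal.toReal_ofReal (by exact_mod_cast hrν0 _)]
  have hqtoReal : ∀ i, q i = (μ' {zenum i}).toReal := by
    intro i
    rw [hrμval, ENNReal.toReal_ofReal (by exact_mod_cast hrμ0 _)]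
  have hp0 : ∀ i, 0 ≤ p i := fun i => by rw [hptoReal]; exact ENNReal.toReal_nonneg
  have hq0 : ∀ i, 0 ≤ q i := fun i => by rw [hqtoReal]; exact ENNReal.toReal_nonneg
  have hpanti : Antitone p := by
    intro i j hij
    rw [hptoReal, hptoReal]
    apply ENNReal.toReal_mono (MeasureTheory.measure_ne_top ν _)
    rw [hνs, hνs]
    exact hfsort i j hij
  have hqanti : Antitone q := by
    intro i j hij
    rw [hqtoReal, hqtoReal]
    apply ENNReal.toReal_mono (MeasureTheory.measure_ne_top μ' _)
    exact St12.qe_antitone μ' hsymm m hm1 hm2 hij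
  have hqpair : ∀ x : ℕ, q (2 * x + 2) = q (2 * x + 1) := by
    intro x
    rw [hqtoReal, hqtoReal]
    congr 1
    have h1 : 2 * x + 2 = 2 * (x + 1) := by ring
    rw [h1, St12.zenum_even (x+1), St12.zenum_odd x]
    have hcast : -(((x + 1 : ℕ)) : ℤ) = -((x : ℤ) + 1) := by push_cast; ring
    rw [hcast]
    exact hsymm ((x : ℤ) + 1)

  -- support of ν
  set Sν : Finset ℤ := T.image f.symm with hSνdef
  have hSν : ∀ z ∉ Sν, rν z = 0 := by
    intro z hz
    have hfz : f z ∉ T := by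
      intro hfz
      exact hz (Finset.mem_image.mpr ⟨f z, hfz, by simp⟩)
    have h0 : ν {z} = 0 := by rw [hνs]; exact hT _ hfz
    rw [hrνval z] at h0
    have h1 : (rν z : ℝ) ≤ 0 := ENNReal.ofReal_eq_zero.mp h0
    have h2 : (0 : ℝ) ≤ (rν z : ℝ) := by exact_mod_cast hrν0 z
    exact_mod_cast le_antisymm h1 h2
  have hpzero : ∀ i, T.card ≤ i → p i = 0 := by
    intro i hi
    rw [hptoReal, hνs, hfzero i hi]
    simp
  have hrνzero : ∀ i, T.card ≤ i → rν (zenum i) = 0 := by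
    intro i hi
    have h0 : ν {zenum i} = 0 := by rw [hνs]; exact hfzero i hi
    rw [hrνval] at h0
    have h1 : (rν (zenum i) : ℝ) ≤ 0 := ENNReal.ofReal_eq_zero.mp h0
    have h2 : (0 : ℝ) ≤ (rν (zenum i) : ℝ) := by exact_mod_cast hrν0 _
    exact_mod_cast le_antisymm h1 h2
  -- prefix domination with 1 + ε
  have hpre_eps : ∀ j : ℕ, 0 < j →
      ∑ i ∈ Finset.range j, p i ≤ (1 + ε) * ∑ i ∈ Finset.range j, q i := by
    intro j hj
    have h1 : ∑ i ∈ Finset.range j, p i ≤ concQk μ j := by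
      set Aj : Finset ℤ := (Finset.range j).image (fun i => f (zenum i)) with hAj
      have hinj : ∀ x ∈ Finset.range j, ∀ y ∈ Finset.range j,
          f (zenum x) = f (zenum y) → x = y := by
        intro x _ y _ h
        exact St12.zenum_injective (f.injective h)
      have hAcard : Aj.card = j := by
        rw [hAj, Finset.card_image_of_injOn (fun x hx y hy h => hinj x hx y hy h),
          Finset.card_range]
      have hμA : (μ ↑Aj).toReal = ∑ i ∈ Finset.range j, p i := by
        rw [St12.meas_finset, hAj, Finset.sum_image hinj]
        rw [ENNReal.toReal_sum (fun i _ => MeasureTheory.measure_ne_top μ _)]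
        apply Finset.sum_congr rfl
        intro i _
        rw [hptoReal, hνs]
      calc ∑ i ∈ Finset.range j, p i = (μ ↑Aj).toReal := hμA.symm
      _ ≤ concQk μ Aj.card := St12.concQk_ge_finset μ Aj
      _ = concQk μ j := by rw [hAcard]
    have h2 : concQk μ' j ≤ ∑ i ∈ Finset.range j, q i :=
      St12.concQk_le_sum μ' q hqanti (fun i => (hqtoReal i).symm) j
    have h3 := hdom j hj
    have h4 : 0 ≤ 1 + ε := by linarith
    calc ∑ i ∈ Finset.range j, p i ≤ concQk μ j := h1
    _ ≤ (1 + ε) * concQk μ' j := h3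
    _ ≤ (1 + ε) * ∑ i ∈ Finset.range j, q i := mul_le_mul_of_nonneg_left h2 h4
  -- positivity of q 0
  have hq0pos : 0 < q 0 := by
    have hT'1 : μ' ↑T' = 1 := by
      have hc : μ' (↑T')ᶜ = 0 := by
        apply St12.meas_null_of_atoms _ (Set.to_countable _)
        intro x hx
        exact hT' x (by simpa using hx)
      have := MeasureTheory.measure_add_measure_compl (μ := μ') (St12.meas_all (↑T' : Set ℤ))
      rw [hc, add_zero] at this
      rw [this]
      exact MeasureTheory.measure_univ
    have h1 : (1 : ℝ) ≤ concQk μ' T'.card := by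
      have := St12.concQk_ge_finset μ' T'
      rw [hT'1] at this
      simpa using this
    have h2 : concQk μ' T'.card ≤ ∑ i ∈ Finset.range T'.card, q i :=
      St12.concQk_le_sum μ' q hqanti (fun i => (hqtoReal i).symm) T'.card
    have h3 : ∑ i ∈ Finset.range T'.card, q i ≤ (T'.card : ℝ) * q 0 := by
      have := Finset.sum_le_card_nsmul (Finset.range T'.card) q (q 0)
        (fun i _ => hqanti (Nat.zero_le i))
      rwa [Finset.card_range, nsmul_eq_mul] at this
    by_contra hq
    push_neg at hq
    have h5 : (T'.card : ℝ) * q 0 ≤ 0 :=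
      mul_nonpos_of_nonneg_of_nonpos (Nat.cast_nonneg _) hq
    linarith
  have hQpos : ∀ j : ℕ, 1 ≤ j → 0 < ∑ i ∈ Finset.range j, q i := by
    intro j hj
    have h1 : q 0 ≤ ∑ i ∈ Finset.range j, q i :=
      Finset.single_le_sum (f := q) (fun i _ => hq0 i) (Finset.mem_range.mpr (by omega))
    linarith
  -- rational prefix sums
  set Pq : ℕ → ℚ := fun j => ∑ i ∈ Finset.range j, rν (zenum i) with hPq
  set Qq : ℕ → ℚ := fun j => ∑ i ∈ Finset.range j, rμ (zenum i) with hQq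
  have hPqcast : ∀ j, ((Pq j : ℚ) : ℝ) = ∑ i ∈ Finset.range j, p i := by
    intro j
    rw [hPq]
    push_cast
    rfl
  have hQqcast : ∀ j, ((Qq j : ℚ) : ℝ) = ∑ i ∈ Finset.range j, q i := by
    intro j
    rw [hQq]
    push_cast
    rfl
  have hn1 : 1 ≤ T.card := by
    by_contra h
    have hTe : T = ∅ := by
      rw [← Finset.card_eq_zero]; omega
    have h0 : μ Set.univ = 0 := by
      apply St12.meas_null_of_atoms _ (Set.to_countable _)
      intro x _
      apply hT
      rw [hTe]
      exact Finset.notMem_empty x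
    rw [MeasureTheory.measure_univ] at h0
    exact one_ne_zero h0
  have hne : (Finset.Icc 1 T.card).Nonempty := ⟨1, by simp [hn1]⟩
  set dq : ℚ := max 1 ((Finset.Icc 1 T.card).sup' hne (fun j => Pq j / Qq j)) with hdq
  have hd1 : (1 : ℚ) ≤ dq := le_max_left _ _
  have hd0 : (0 : ℚ) ≤ dq := by linarith
  have hQqpos : ∀ j, 1 ≤ j → 0 < Qq j := by
    intro j hj
    have := hQpos j hj
    rw [← hQqcast] at this
    exact_mod_cast this
  have hdpre : ∀ j : ℕ, Pq j ≤ dq * Qq j := by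
    intro j
    rcases Nat.eq_zero_or_pos j with rfl | hj
    · simp [hPq, hQq]
    rcases le_or_gt j T.card with hjn | hjn
    · have hmem : j ∈ Finset.Icc 1 T.card := Finset.mem_Icc.mpr ⟨hj, hjn⟩
      have hsup : Pq j / Qq j ≤ dq :=
        le_trans (Finset.le_sup' (fun j => Pq j / Qq j) hmem) (le_max_right _ _)
      rw [div_le_iff₀ (hQqpos j hj)] at hsup
      linarith [hsup]
    · have hPeq : Pq j = Pq T.card := by
        rw [hPq]
        symm
        apply Finset.sum_subset (Finset.range_subset_range.mpr (le_of_lt hjn))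
        intro i _ hi
        exact hrνzero i (by simpa using hi)
      have hQle : Qq T.card ≤ Qq j := by
        apply Finset.sum_le_sum_of_subset_of_nonneg (Finset.range_subset_range.mpr (le_of_lt hjn))
        intro i _ _
        exact hrμ0 _
      have h1 : Pq T.card ≤ dq * Qq T.card := by
        have hmem : T.card ∈ Finset.Icc 1 T.card := Finset.mem_Icc.mpr ⟨hn1, le_refl _⟩
        have hsup : Pq T.card / Qq T.card ≤ dq :=
          le_trans (Finset.le_sup' (fun j => Pq j / Qq j) hmem) (le_max_right _ _)
        rw [div_le_iff₀ (hQqpos _ hn1)] at hsup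
        linarith [hsup]
      calc Pq j = Pq T.card := hPeq
      _ ≤ dq * Qq T.card := h1
      _ ≤ dq * Qq j := mul_le_mul_of_nonneg_left hQle hd0
  have hdle : (dq : ℝ) ≤ 1 + ε := by
    rw [hdq]
    push_cast [Rat.cast_max]
    apply max_le (by linarith)
    obtain ⟨j, hjmem, hjeq⟩ := Finset.exists_mem_eq_sup' hne (fun j => Pq j / Qq j)
    rw [hjeq]
    obtain ⟨hj1, _⟩ := Finset.mem_Icc.mp hjmem
    have hQ := hQpos j hj1
    rw [Rat.cast_div, div_le_iff₀ (by rw [hQqcast]; exact hQ)]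
    rw [hPqcast, hQqcast]
    exact hpre_eps j hj1

  -- apply the Hall-type construction
  have hpiz : ∀ z : ℤ, ((rν z : ℚ) : ℝ) = p (izenum z) := by
    intro z
    show ((rν z : ℚ) : ℝ) = ((rν (zenum (izenum z)) : ℚ) : ℝ)
    rw [St12.zenum_izenum]
  have hqix : ∀ x : ℤ, ((rμ x : ℚ) : ℝ) = q (izenum x) := by
    intro x
    show ((rμ x : ℚ) : ℝ) = ((rμ (zenum (izenum x)) : ℚ) : ℝ)
    rw [St12.zenum_izenum]
  have hdpreR : ∀ j : ℕ, ∑ i ∈ Finset.range j, p i ≤ (dq : ℝ) * ∑ i ∈ Finset.range j, q i := by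
    intro j
    have h := hdpre j
    have h2 : ((Pq j : ℚ) : ℝ) ≤ ((dq * Qq j : ℚ) : ℝ) := by exact_mod_cast h
    rw [hPqcast, Rat.cast_mul, hQqcast] at h2
    exact h2
  have hhall : ∀ B : Finset ℤ, B ⊆ Sν → B.Nonempty →
      ∑ z ∈ B, ((rν z : ℚ) : ℝ) ≤ (dq : ℝ) * ∑ x ∈ B.biUnion St12.goodF, ((rμ x : ℚ) : ℝ) :=
    fun B _ hBne => St12.hall_real p q (dq : ℝ) (fun z => ((rν z : ℚ) : ℝ))
      (fun x => ((rμ x : ℚ) : ℝ)) hpiz hqix hpanti hq0 hqpair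
      (by exact_mod_cast hd0) hdpreR B hBne
  obtain ⟨π, hπprob, hπfst, hπsnd, hπgood⟩ :=
    St12.exists_pi ν μ' rν rμ hrνval hrν0 hrμval hrμ0 Sν hSν dq hd0 hhall
  -- scalars
  set dE : ℝ≥0∞ := ENNReal.ofReal ((dq : ℝ)) with hdE
  have hdE1 : 1 ≤ dE := ENNReal.one_le_ofReal.mpr (by exact_mod_cast hd1)
  have hdEne0 : dE ≠ 0 := by
    intro h
    rw [h] at hdE1
    simp at hdE1
  have hdEtop : dE ≠ ⊤ := ENNReal.ofReal_ne_top
  set c' : ℝ≥0∞ := dE⁻¹ with hc'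
  have hc'd : c' * dE = 1 := ENNReal.inv_mul_cancel hdEne0 hdEtop
  have hc'ne0 : c' ≠ 0 := ENNReal.inv_ne_zero.mpr hdEtop
  have hc'netop : c' ≠ ⊤ := ENNReal.inv_ne_top.mpr hdEne0
  have hc'le1 : c' ≤ 1 := ENNReal.inv_le_one.mpr hdE1
  set τ : MeasureTheory.Measure ℤ := MeasureTheory.Measure.map Prod.snd π with hτdef
  have hτprob : MeasureTheory.IsProbabilityMeasure τ :=
    MeasureTheory.Measure.isProbabilityMeasure_map measurable_snd.aemeasurable
  have hτle : ∀ x, c' * τ {x} ≤ μ' {x} := by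
    intro x
    calc c' * τ {x} ≤ c' * (dE * μ' {x}) := mul_le_mul_right (hπsnd x) c'
    _ = (c' * dE) * μ' {x} := (mul_assoc _ _ _).symm
    _ = μ' {x} := by rw [hc'd, one_mul]
  have hτzero : ∀ x ∉ T', τ {x} = 0 := by
    intro x hx
    have h := hπsnd x
    rw [hT' x hx, mul_zero] at h
    exact le_antisymm h zero_le
  have hμ'T1 : μ' ↑T' = 1 := by
    have hc : μ' (↑T')ᶜ = 0 := by
      apply St12.meas_null_of_atoms _ (Set.to_countable _)
      intro x hx
      exact hT' x (by simpa using hx)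
    have h2 := MeasureTheory.measure_add_measure_compl (μ := μ') (St12.meas_all (↑T' : Set ℤ))
    rw [hc, add_zero] at h2
    rw [h2]
    exact MeasureTheory.measure_univ
  have hτT1 : τ ↑T' = 1 := by
    have hc : τ (↑T')ᶜ = 0 := by
      apply St12.meas_null_of_atoms _ (Set.to_countable _)
      intro x hx
      exact hτzero x (by simpa using hx)
    have h2 := MeasureTheory.measure_add_measure_compl (μ := τ) (St12.meas_all (↑T' : Set ℤ))
    rw [hc, add_zero] at h2
    rw [h2]
    exact MeasureTheory.measure_univ
  -- residual measure
  set ρ : MeasureTheory.Measure ℤ :=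
    ∑ x ∈ T', (μ' {x} - c' * τ {x}) • MeasureTheory.Measure.dirac x with hρdef
  have hρs : ∀ y, ρ {y} = μ' {y} - c' * τ {y} := by
    intro y
    rw [hρdef, MeasureTheory.Measure.finset_sum_apply]
    have hterm : ∀ x ∈ T', ((μ' {x} - c' * τ {x}) • MeasureTheory.Measure.dirac x) ({y} : Set ℤ)
        = if x = y then (μ' {x} - c' * τ {x}) else 0 := by
      intro x _
      rw [MeasureTheory.Measure.smul_apply, MeasureTheory.Measure.dirac_apply' _ (St12.meas_all _)]
      by_cases h : x = y
      · subst h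
        simp [Set.indicator_apply]
      · simp [Set.indicator_apply, h]
    rw [Finset.sum_congr rfl hterm, Finset.sum_ite_eq' T' y _]
    by_cases hy : y ∈ T'
    · rw [if_pos hy]
    · rw [if_neg hy, hT' y hy, hτzero y hy]
      simp
  have hρuniv : ρ Set.univ = 1 - c' := by
    rw [hρdef, MeasureTheory.Measure.finset_sum_apply]
    have hterm : ∀ x ∈ T', ((μ' {x} - c' * τ {x}) • MeasureTheory.Measure.dirac x) (Set.univ)
        = μ' {x} - c' * τ {x} := by
      intro x _
      rw [MeasureTheory.Measure.smul_apply]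
      simp
    rw [Finset.sum_congr rfl hterm]
    have hadd : ∑ x ∈ T', (μ' {x} - c' * τ {x}) + ∑ x ∈ T', c' * τ {x} = ∑ x ∈ T', μ' {x} := by
      rw [← Finset.sum_add_distrib]
      exact Finset.sum_congr rfl (fun x _ => tsub_add_cancel_of_le (hτle x))
    have hμsum : ∑ x ∈ T', μ' {x} = 1 := by
      rw [← St12.meas_finset, hμ'T1]
    have hτsum : ∑ x ∈ T', c' * τ {x} = c' := by
      rw [← Finset.mul_sum, ← St12.meas_finset, hτT1, mul_one]
    rw [hμsum, hτsum] at hadd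
    exact ENNReal.eq_sub_of_add_eq hc'netop hadd
  have hρfin : MeasureTheory.IsFiniteMeasure ρ :=
    ⟨by rw [hρuniv]; exact lt_of_le_of_lt tsub_le_self ENNReal.one_lt_top⟩

  -- the underlying space and measure
  haveI := hρfin
  haveI := hπprob
  set g1 : ℤ × ℤ → (ℤ × ℤ) × Bool := fun pp => (pp, true) with hg1def
  set g2 : ℤ × ℤ → (ℤ × ℤ) × Bool := fun pp => (pp, false) with hg2def
  have hg1 : Measurable g1 := measurable_of_countable _
  have hg2 : Measurable g2 := measurable_of_countable _
  set Pm : MeasureTheory.Measure ((ℤ × ℤ) × Bool) :=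
    MeasureTheory.Measure.map g1 (c' • π) + MeasureTheory.Measure.map g2 (ν.prod ρ) with hPm
  set Z : (ℤ × ℤ) × Bool → ℤ := fun ω => ω.1.1 with hZdef
  set X' : (ℤ × ℤ) × Bool → ℤ := fun ω => ω.1.2 with hXdef
  set A : Set ((ℤ × ℤ) × Bool) := {ω | ω.2 = true} with hAdef
  have hZm : Measurable Z := measurable_of_countable _
  have hXm : Measurable X' := measurable_of_countable _
  have hmeasAll : ∀ s : Set ((ℤ × ℤ) × Bool), MeasurableSet s :=
    fun s => (Set.to_countable s).measurableSet
  have hg1A : g1 ⁻¹' A = Set.univ := by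
    ext pp
    simp [hg1def, hAdef]
  have hg2A : g2 ⁻¹' A = ∅ := by
    ext pp
    simp [hg2def, hAdef]
  have hPapp : ∀ s : Set ((ℤ × ℤ) × Bool),
      Pm s = (c' • π) (g1 ⁻¹' s) + (ν.prod ρ) (g2 ⁻¹' s) := by
    intro s
    rw [hPm, MeasureTheory.Measure.add_apply,
      MeasureTheory.Measure.map_apply hg1 (hmeasAll s),
      MeasureTheory.Measure.map_apply hg2 (hmeasAll s)]
  have hπuniv : π Set.univ = 1 := MeasureTheory.measure_univ
  have hprodU : (ν.prod ρ) Set.univ = 1 - c' := by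
    rw [← Set.univ_prod_univ, MeasureTheory.Measure.prod_prod,
      MeasureTheory.measure_univ, one_mul, hρuniv]
  have hPA : Pm A = c' := by
    rw [hPapp, hg1A, hg2A]
    simp [hπuniv]
  have hPAc : Pm Aᶜ = 1 - c' := by
    rw [hPapp]
    have h1 : g1 ⁻¹' Aᶜ = ∅ := by
      rw [Set.preimage_compl, hg1A]
      simp
    have h2 : g2 ⁻¹' Aᶜ = Set.univ := by
      rw [Set.preimage_compl, hg2A]
      simp
    rw [h1, h2, hprodU]
    simp
  have hProbPm : MeasureTheory.IsProbabilityMeasure Pm := by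
    constructor
    have hu : (Set.univ : Set ((ℤ × ℤ) × Bool)) = A ∪ Aᶜ := (Set.union_compl_self A).symm
    rw [hu, MeasureTheory.measure_union (disjoint_compl_right) (hmeasAll Aᶜ), hPA, hPAc]
    exact add_tsub_cancel_of_le hc'le1
  -- restrictions
  have hres1 : Pm.restrict A = MeasureTheory.Measure.map g1 (c' • π) := by
    apply MeasureTheory.Measure.ext
    intro s hs
    rw [MeasureTheory.Measure.restrict_apply hs, hPapp,
      MeasureTheory.Measure.map_apply hg1 hs]
    rw [Set.preimage_inter, hg1A, Set.inter_univ, Set.preimage_inter, hg2A,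
      Set.inter_empty]
    simp
  have hres2 : Pm.restrict Aᶜ = MeasureTheory.Measure.map g2 (ν.prod ρ) := by
    apply MeasureTheory.Measure.ext
    intro s hs
    rw [MeasureTheory.Measure.restrict_apply hs, hPapp,
      MeasureTheory.Measure.map_apply hg2 hs]
    have h1 : g1 ⁻¹' Aᶜ = ∅ := by
      rw [Set.preimage_compl, hg1A]; simp
    have h2 : g2 ⁻¹' Aᶜ = Set.univ := by
      rw [Set.preimage_compl, hg2A]; simp
    rw [Set.preimage_inter, h1, Set.inter_empty, Set.preimage_inter, h2,
      Set.inter_univ]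
    simp
  -- laws
  have hmapZ1 : MeasureTheory.Measure.map Z (MeasureTheory.Measure.map g1 (c' • π))
      = c' • ν := by
    rw [MeasureTheory.Measure.map_map hZm hg1]
    have : Z ∘ g1 = Prod.fst := rfl
    rw [this, MeasureTheory.Measure.map_smul, hπfst]
  have hmapZ2 : MeasureTheory.Measure.map Z (MeasureTheory.Measure.map g2 (ν.prod ρ))
      = (1 - c') • ν := by
    rw [MeasureTheory.Measure.map_map hZm hg2]
    have : Z ∘ g2 = Prod.fst := rfl
    rw [this, MeasureTheory.Measure.map_fst_prod, hρuniv]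
  have hlawZ : MeasureTheory.Measure.map Z Pm = ν := by
    rw [hPm, MeasureTheory.Measure.map_add _ _ hZm, hmapZ1, hmapZ2,
      ← add_smul, add_tsub_cancel_of_le hc'le1, one_smul]
  have hlawX : MeasureTheory.Measure.map X' Pm = μ' := by
    rw [hPm, MeasureTheory.Measure.map_add _ _ hXm]
    rw [MeasureTheory.Measure.map_map hXm hg1, MeasureTheory.Measure.map_map hXm hg2]
    have e1 : X' ∘ g1 = Prod.snd := rfl
    have e2 : X' ∘ g2 = Prod.snd := rfl
    rw [e1, e2, MeasureTheory.Measure.map_smul, ← hτdef,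
      MeasureTheory.Measure.map_snd_prod, MeasureTheory.measure_univ, one_smul]
    apply MeasureTheory.Measure.ext_of_singleton
    intro x
    rw [MeasureTheory.Measure.add_apply, MeasureTheory.Measure.smul_apply, hρs x,
      smul_eq_mul]
    exact add_tsub_cancel_of_le (hτle x)
  -- conditional law on A
  have hcondA : MeasureTheory.Measure.map Z (Pm[|A]) = ν := by
    have hcd : Pm[|A] = (Pm A)⁻¹ • Pm.restrict A := rfl
    rw [hcd, hPA, hres1, MeasureTheory.Measure.map_smul, hmapZ1, smul_smul,
      ENNReal.inv_mul_cancel hc'ne0 hc'netop, one_smul]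
  -- probability of A
  have hprobA : 1 / (1 + ε) ≤ (Pm A).toReal := by
    rw [hPA, hc', ENNReal.toReal_inv, hdE, ENNReal.toReal_ofReal (by exact_mod_cast hd0)]
    rw [one_div]
    have hdqpos : (0 : ℝ) < (dq : ℝ) := by exact_mod_cast lt_of_lt_of_le zero_lt_one hd1
    exact inv_anti₀ hdqpos hdle
  -- order property
  have horder : ∀ᵐ ω ∂Pm, ω ∈ A →
      (0 ≤ X' ω ∧ X' ω ≤ Z ω) ∨ (Z ω - 1 ≤ X' ω ∧ X' ω ≤ 0) := by
    rw [MeasureTheory.ae_iff]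
    set E : Set ((ℤ × ℤ) × Bool) :=
      {ω | ¬ (ω ∈ A → (0 ≤ X' ω ∧ X' ω ≤ Z ω) ∨ (Z ω - 1 ≤ X' ω ∧ X' ω ≤ 0))} with hE
    have h2 : g2 ⁻¹' E = ∅ := by
      ext pp
      simp only [hE, Set.mem_preimage, Set.mem_setOf_eq, Set.mem_empty_iff_false, iff_false,
        not_not]
      intro hA'
      exact absurd hA' (by simp [hg2def, hAdef])
    have h1 : g1 ⁻¹' E ⊆ {pp : ℤ × ℤ | pp.2 ∉ St12.goodF pp.1} := by
      intro pp hpp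
      simp only [hE, Set.mem_preimage, Set.mem_setOf_eq] at hpp
      simp only [Set.mem_setOf_eq]
      intro hmem
      apply hpp
      intro _
      rcases Finset.mem_union.mp hmem with h | h
      · obtain ⟨ha, hb⟩ := Finset.mem_Icc.mp h
        left
        exact ⟨ha, hb⟩
      · obtain ⟨ha, hb⟩ := Finset.mem_Icc.mp h
        right
        exact ⟨ha, hb⟩
    show Pm E = 0
    rw [hPapp, h2]
    have h3 : π (g1 ⁻¹' E) = 0 := MeasureTheory.measure_mono_null h1 hπgood
    rw [MeasureTheory.Measure.smul_apply, h3]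
    simp
  -- conditional law and independence on the complement
  have hnec : ∀ _ : Pm Aᶜ ≠ 0, (1 - c') ≠ 0 := by
    intro h
    rwa [hPAc] at h
  have h1ctop : (1 - c') ≠ ⊤ := by
    have : (1 - c') ≤ 1 := tsub_le_self
    intro h
    rw [h] at this
    exact ENNReal.top_ne_one (le_antisymm (le_top) this ▸ rfl)
  have hcondAc : Pm Aᶜ ≠ 0 → MeasureTheory.Measure.map Z (Pm[|Aᶜ]) = ν := by
    intro h
    have hc0 := hnec h
    have hcd : Pm[|Aᶜ] = (Pm Aᶜ)⁻¹ • Pm.restrict Aᶜ := rfl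
    rw [hcd, hPAc, hres2, MeasureTheory.Measure.map_smul, hmapZ2, smul_smul,
      ENNReal.inv_mul_cancel hc0 h1ctop, one_smul]
  have hindep : Pm Aᶜ ≠ 0 → ProbabilityTheory.IndepFun Z X' (Pm[|Aᶜ]) := by
    intro h
    have hc0 := hnec h
    set ρ1 : MeasureTheory.Measure ℤ := (1 - c')⁻¹ • ρ with hρ1
    have hρ1prob : MeasureTheory.IsProbabilityMeasure ρ1 := by
      constructor
      rw [hρ1, MeasureTheory.Measure.smul_apply, hρuniv, smul_eq_mul,
        ENNReal.inv_mul_cancel hc0 h1ctop]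
    haveI := hρ1prob
    have hprodsmul : ν.prod ρ1 = (1 - c')⁻¹ • (ν.prod ρ) := by
      apply MeasureTheory.Measure.ext_of_singleton
      intro pp
      have hsingle : ({pp} : Set (ℤ × ℤ)) = {pp.1} ×ˢ {pp.2} := by
        rw [Set.singleton_prod_singleton]
      rw [hsingle, MeasureTheory.Measure.smul_apply,
        MeasureTheory.Measure.prod_prod, MeasureTheory.Measure.prod_prod,
        hρ1, MeasureTheory.Measure.smul_apply, smul_eq_mul, smul_eq_mul]
      ring
    have hP' : Pm[|Aᶜ] = MeasureTheory.Measure.map g2 (ν.prod ρ1) := by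
      have hcd : Pm[|Aᶜ] = (Pm Aᶜ)⁻¹ • Pm.restrict Aᶜ := rfl
      rw [hcd, hPAc, hres2, hprodsmul, MeasureTheory.Measure.map_smul]
    rw [hP']
    haveI : MeasureTheory.IsProbabilityMeasure (ν.prod ρ1) := by infer_instance
    haveI : MeasureTheory.IsProbabilityMeasure
        (MeasureTheory.Measure.map g2 (ν.prod ρ1)) :=
      MeasureTheory.Measure.isProbabilityMeasure_map hg2.aemeasurable
    apply (ProbabilityTheory.indepFun_iff_map_prod_eq_prod_map_map
      hZm.aemeasurable hXm.aemeasurable).mpr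
    have e0 : (fun ω => (Z ω, X' ω)) ∘ g2 = id := rfl
    rw [MeasureTheory.Measure.map_map (by exact measurable_of_countable _) hg2, e0,
      MeasureTheory.Measure.map_id]
    rw [MeasureTheory.Measure.map_map hZm hg2, MeasureTheory.Measure.map_map hXm hg2]
    have e1 : Z ∘ g2 = Prod.fst := rfl
    have e2 : X' ∘ g2 = Prod.snd := rfl
    rw [e1, e2, MeasureTheory.Measure.map_fst_prod, MeasureTheory.Measure.map_snd_prod]
    rw [MeasureTheory.measure_univ, MeasureTheory.measure_univ, one_smul, one_smul]
  exact ⟨⟨(ℤ × ℤ) × Bool, Pm, hProbPm, Z, X', A, hZm, hXm, hmeasAll A, hlawZ, hlawX,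
    hprobA, hcondA, horder, hcondAc, hindep⟩⟩




theorem statement12 (μ μ' : MeasureTheory.Measure ℤ)
    (hμ : MeasureTheory.IsProbabilityMeasure μ)
    (hμ' : MeasureTheory.IsProbabilityMeasure μ')
    (hfin : ∃ s : Finset ℤ, ∀ x ∉ s, μ {x} = 0)
    (hfin' : ∃ s : Finset ℤ, ∀ x ∉ s, μ' {x} = 0)
    (hrat : ∀ x : ℤ, ∃ q : ℚ, μ {x} = ENNReal.ofReal (q : ℝ))
    (hrat' : ∀ x : ℤ, ∃ q : ℚ, μ' {x} = ENNReal.ofReal (q : ℝ))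
    (hsymm : IsSymmetricZ μ') (huni : IsUnimodal μ')
    (ε : ℝ) (hε : 0 ≤ ε) (hdom : EpsDom ε μ μ') :
    ∃ ν : MeasureTheory.Measure ℤ, IsPlusRearrangement μ ν ∧
      Nonempty (PlusCoupling ν μ' ε) := by
  exact statement12' μ μ' hμ hμ' hfin hfin' hrat hrat' hsymm huni ε hε hdom
end

section
/- For any integer d ≥ 2 and any γ > 0 there are positive reals δ₀ = δ₀(d, γ), R₁ = R₁(d, γ) and a positive integer L₀ = L₀(d, γ) such that the following holds. Let X be a random vector in ℝ^d and let [X] be obtained by rounding each component of X to the nearest integer. Let q = sup over unit vectors e ∈ ℝ^d of Q(⟨e, X⟩, 1), where Q(Y, t) := sup_{x ∈ ℝ} P(Y ∈ (x, x + t)). Let R₀ > 0 and suppose that on the open ball {x : ‖x‖ < R₀} the random vector X has a positive differentiable density f with sup_{‖x‖ < R₀} ‖∇ ln f(x)‖ ≤ δ₀. Then for any vector a ∈ ℝ^d, either max_{x ∈ ℤ} P(⟨a, [X]⟩ = x) ≤ γq + P(‖X‖ ≥ R₀ − R₁), or there exists κ ∈ ℝ, κ ≠ 0, with κa ∈ {−L₀,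 …, L₀}^d. -/
open MeasureTheory
open scoped RealInnerProductSpace

lemma coord_le_norm (d : ℕ) (a : EuclideanSpace ℝ (Fin d)) (i : Fin d) : |a i| ≤ ‖a‖ := by
  rw [EuclideanSpace.norm_eq, ← Real.sqrt_sq_eq_abs]
  apply Real.sqrt_le_sqrt
  exact Finset.single_le_sum (f := fun j => ‖a j‖^2) (fun j _ => sq_nonneg _)
    (Finset.mem_univ i) |>.trans_eq' (by rw [Real.norm_eq_abs, sq_abs])

lemma norm_vec_le (d : ℕ) (B : ℝ) (hB : 0 ≤ B) (v : EuclideanSpace ℝ (Fin d))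
    (hv : ∀ i, |v i| ≤ B) : ‖v‖ ≤ d * B := by
  rw [EuclideanSpace.norm_eq]
  have h1 : ∑ i, ‖v i‖^2 ≤ (d : ℝ) * B^2 := by
    calc ∑ i, ‖v i‖^2 ≤ ∑ _i : Fin d, B^2 := by
          apply Finset.sum_le_sum; intro i _
          rw [Real.norm_eq_abs]
          exact pow_le_pow_left₀ (abs_nonneg _) (hv i) 2
      _ = d * B^2 := by simp [mul_comm]
  calc Real.sqrt (∑ i, ‖v i‖^2) ≤ Real.sqrt ((d:ℝ) * B^2) := Real.sqrt_le_sqrt h1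
    _ ≤ Real.sqrt (((d:ℝ)*B)^2) := by
        apply Real.sqrt_le_sqrt; rw [mul_pow]
        apply mul_le_mul_of_nonneg_right _ (sq_nonneg _)
        exact_mod_cast Nat.cast_le.mpr (Nat.le_self_pow two_ne_zero d) |>.trans_eq
          (by push_cast; ring)
    _ = (d:ℝ)*B := Real.sqrt_sq (mul_nonneg (Nat.cast_nonneg d) hB)

lemma dichotomy (d Q : ℕ) (hQ : 1 ≤ Q) (a : EuclideanSpace ℝ (Fin d)) (ha : a ≠ 0) :
    (∃ u : Fin d → ℤ, (∀ i, |u i| ≤ (Q : ℤ)) ∧ 0 < ∑ i, a i * u i ∧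
      ∑ i, a i * u i ≤ ‖a‖ / Q) ∨
    (∃ κ : ℝ, κ ≠ 0 ∧ ∀ i, ∃ m : ℤ, |m| ≤ ((Q^d : ℕ) : ℤ) ∧ κ * a i = m) := by
  classical
  have hne : (Finset.univ : Finset (Fin d)).Nonempty := by
    by_contra h
    exact ha (by ext i; exact absurd ⟨i, Finset.mem_univ i⟩ h)
  obtain ⟨j, -, hj⟩ := Finset.exists_max_image Finset.univ (fun i => |a i|) hne
  have haj : a j ≠ 0 := by
    intro h0
    apply ha
    ext i
    have := hj i (Finset.mem_univ i)
    rw [h0, abs_zero] at this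
    simpa using le_antisymm this (abs_nonneg _)
  by_cases hC : ∃ u : Fin d → ℤ, (∀ i, |u i| ≤ (Q : ℤ)) ∧ 0 < ∑ i, a i * u i ∧
      ∑ i, a i * u i ≤ ‖a‖ / Q
  · exact Or.inl hC
  right
  have hQR : (0:ℝ) < Q := by exact_mod_cast hQ
  have hdir : ∀ i : Fin d, ∃ p q : ℤ, 0 < q ∧ q ≤ (Q:ℤ) ∧
      |(q:ℝ) * (a i / a j) - p| ≤ 1/((Q:ℝ)+1) :=
    fun i => by
      obtain ⟨p, q, h1, h2, h3⟩ := Real.exists_int_int_abs_mul_sub_le (a i / a j)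
        (show 0 < Q from hQ)
      exact ⟨p, q, h1, h2, by exact_mod_cast h3⟩
  choose p q hq0 hqQ hpq using hdir
  have hxi : ∀ i, |a i / a j| ≤ 1 := fun i => by
    rw [abs_div]
    exact div_le_one_of_le₀ (hj i (Finset.mem_univ i)) (abs_nonneg _)
  have hfrac_lt_one : 1/((Q:ℝ)+1) < 1 := by
    rw [div_lt_one (by linarith)]; linarith
  have hp : ∀ i, |p i| ≤ q i := by
    intro i
    have h1 : |(p i : ℝ)| ≤ |(q i : ℝ) * (a i / a j) - p i| + |(q i:ℝ)*(a i/a j)| := by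
      rw [abs_sub_comm]
      calc |(p i:ℝ)| = |((p i:ℝ) - q i * (a i/a j)) + q i * (a i / a j)| := by ring_nf
        _ ≤ _ := abs_add_le _ _
    have h2 : |(q i:ℝ)*(a i/a j)| ≤ (q i:ℝ) := by
      rw [abs_mul, abs_of_pos (show (0:ℝ) < q i by exact_mod_cast hq0 i)]
      calc (q i:ℝ) * |a i / a j| ≤ (q i:ℝ) * 1 :=
            mul_le_mul_of_nonneg_left (hxi i) (by exact_mod_cast (hq0 i).le)
        _ = q i := mul_one _
    have h3 : |(p i:ℝ)| < (q i:ℝ) + 1 :=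
      lt_of_le_of_lt (h1.trans (add_le_add (hpq i) h2)) (by linarith)
    have h5 : (|p i| : ℤ) < q i + 1 := by
      have : ((|p i| : ℤ) : ℝ) < (q i:ℝ) + 1 := by rw [Int.cast_abs]; exact h3
      exact_mod_cast this
    omega
  have key : ∀ i, (q i : ℝ) * a i = (p i : ℝ) * a j := by
    intro i
    by_contra hne0
    set s : ℝ := (q i : ℝ) * a i - (p i : ℝ) * a j with hs
    have hsne : s ≠ 0 := sub_ne_zero.mpr hne0
    have hsabs : |s| ≤ ‖a‖ / Q := by
      have hrepr : s = a j * ((q i:ℝ) * (a i / a j) - p i) := by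
        field_simp [hs]
        ring
      rw [hrepr, abs_mul]
      calc |a j| * |(q i:ℝ) * (a i / a j) - p i| ≤ ‖a‖ * (1/((Q:ℝ)+1)) :=
            mul_le_mul (coord_le_norm d a j) (hpq i) (abs_nonneg _) (norm_nonneg _)
        _ ≤ ‖a‖ / Q := by
            rw [mul_one_div, div_le_div_iff₀ (by linarith) hQR]
            have := norm_nonneg a
            nlinarith
    set u₀ : Fin d → ℤ := fun t => (if t = i then q i else 0) - (if t = j then p i else 0)
      with hu₀
    have hsum₀ : ∑ t, a t * (u₀ t : ℝ) = s := by
      have hterm : ∀ t, a t * (u₀ t : ℝ) =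
          (if t = i then a t * q i else 0) - (if t = j then a t * p i else 0) := by
        intro t
        simp only [hu₀]
        push_cast
        split_ifs <;> ring
      rw [Finset.sum_congr rfl (fun t _ => hterm t), Finset.sum_sub_distrib]
      rw [Finset.sum_ite_eq' Finset.univ i, Finset.sum_ite_eq' Finset.univ j]
      simp [hs]; ring
    have hu₀b : ∀ t, |u₀ t| ≤ (Q:ℤ) := by
      intro t
      simp only [hu₀]
      by_cases hti : t = i <;> by_cases htj : t = j
      · have hij : i = j := hti.symm.trans htj
        rw [if_pos hti, if_pos htj]
        have heq : (q i:ℝ) * (a i / a j) - p i = (q i:ℝ) - p i := by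
          rw [hij, div_self haj, mul_one]
        have h6 : |(q i:ℝ) - p i| ≤ 1/((Q:ℝ)+1) := heq ▸ hpq i
        have h7 : |q i - p i| < 1 := by
          have : ((|q i - p i| : ℤ) : ℝ) < 1 := by
            rw [Int.cast_abs]; push_cast
            exact lt_of_le_of_lt h6 hfrac_lt_one
          exact_mod_cast this
        have h8 : q i = p i := by
          have := abs_lt.mp h7; omega
        rw [h8, sub_self, abs_zero]
        exact_mod_cast Nat.zero_le Q
      · rw [if_pos hti, if_neg htj, sub_zero, abs_of_pos (hq0 i)]; exact hqQ i
      · rw [if_neg hti, if_pos htj, zero_sub, abs_neg]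
        exact (hp i).trans (hqQ i)
      · rw [if_neg hti, if_neg htj]
        simp
    rcases hsne.lt_or_gt with hneg | hpos
    · apply hC
      refine ⟨-u₀, fun t => by rw [Pi.neg_apply, abs_neg]; exact hu₀b t, ?_, ?_⟩
      · have : ∑ t, a t * ((-u₀) t : ℝ) = -s := by
          rw [← hsum₀, ← Finset.sum_neg_distrib]
          apply Finset.sum_congr rfl
          intro t _
          simp only [Pi.neg_apply]
          push_cast
          ring
        rw [this]; linarith
      · have : ∑ t, a t * ((-u₀) t : ℝ) = -s := by
          rw [← hsum₀, ← Finset.sum_neg_distrib]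
          apply Finset.sum_congr rfl
          intro t _
          simp only [Pi.neg_apply]
          push_cast
          ring
        rw [this, ← abs_of_neg hneg] at *
        exact hsabs
    · apply hC
      exact ⟨u₀, hu₀b, by rw [hsum₀]; exact hpos,
        by rw [hsum₀, ← abs_of_pos hpos]; exact hsabs⟩
  set L : ℤ := ∏ i, q i with hL
  have hL0 : 0 < L := Finset.prod_pos (fun i _ => hq0 i)
  have hdvd : ∀ i, q i ∣ L := fun i => Finset.dvd_prod_of_mem q (Finset.mem_univ i)
  have hLq : ∀ i, (q i) * (L / q i) = L := fun i => Int.mul_ediv_cancel' (hdvd i)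
  have hLQd : L ≤ (Q:ℤ)^d := by
    calc L ≤ ∏ _i : Fin d, (Q:ℤ) :=
          Finset.prod_le_prod (fun i _ => (hq0 i).le) (fun i _ => hqQ i)
      _ = (Q:ℤ)^d := by rw [Finset.prod_const, Finset.card_univ, Fintype.card_fin]
  refine ⟨(L:ℝ) / a j, div_ne_zero (by exact_mod_cast hL0.ne') haj, ?_⟩
  intro i
  refine ⟨p i * (L / q i), ?_, ?_⟩
  · rw [abs_mul]
    have h1 : 0 ≤ L / q i := Int.ediv_nonneg hL0.le (hq0 i).le
    calc |p i| * |L / q i| ≤ q i * (L / q i) :=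
          mul_le_mul (hp i) (le_of_eq (abs_of_nonneg h1)) (abs_nonneg _) (hq0 i).le
      _ = L := hLq i
      _ ≤ ((Q^d : ℕ):ℤ) := by push_cast; exact hLQd
  · have hqi : (q i : ℝ) ≠ 0 := by exact_mod_cast (hq0 i).ne'
    have hcast : ((L / q i : ℤ) : ℝ) = (L:ℝ) / (q i:ℝ) := by
      have h := congrArg (Int.cast : ℤ → ℝ) (hLq i)
      push_cast at h
      field_simp
      linear_combination h
    push_cast [hcast]
    field_simp
    linear_combination key i

lemma density_shift {d : ℕ} {R₀ δ₀ : ℝ} {f : EuclideanSpace ℝ (Fin d) → ℝ}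
    (hpos : ∀ x, ‖x‖ < R₀ → 0 < f x)
    (hdiff : ∀ x, ‖x‖ < R₀ → DifferentiableAt ℝ f x)
    (hgrad : ∀ x, ‖x‖ < R₀ → ‖gradient (fun y => Real.log (f y)) x‖ ≤ δ₀)
    {y z : EuclideanSpace ℝ (Fin d)} (hy : ‖y‖ < R₀) (hz : ‖z‖ < R₀) :
    f y * Real.exp (-(δ₀ * ‖z - y‖)) ≤ f z := by
  set g : EuclideanSpace ℝ (Fin d) → ℝ := fun x => Real.log (f x) with hg
  have hgd : ∀ x ∈ Metric.ball (0 : EuclideanSpace ℝ (Fin d)) R₀,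
      HasFDerivWithinAt g (fderiv ℝ g x) (Metric.ball 0 R₀) x := by
    intro x hx
    have hx' : ‖x‖ < R₀ := mem_ball_zero_iff.mp hx
    exact (((hdiff x hx').log (hpos x hx').ne').hasFDerivAt).hasFDerivWithinAt
  have hbound : ∀ x ∈ Metric.ball (0 : EuclideanSpace ℝ (Fin d)) R₀,
      ‖fderiv ℝ g x‖ ≤ δ₀ := by
    intro x hx
    have hx' : ‖x‖ < R₀ := mem_ball_zero_iff.mp hx
    have : ‖fderiv ℝ g x‖ = ‖gradient g x‖ :=
      (LinearIsometryEquiv.norm_map (InnerProductSpace.toDual ℝ _).symm _).symm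
    rw [this]
    exact hgrad x hx'
  have hlip := Convex.norm_image_sub_le_of_norm_hasFDerivWithin_le hgd hbound
    (convex_ball 0 R₀) (mem_ball_zero_iff.mpr hy) (mem_ball_zero_iff.mpr hz)
  have h1 : g y - δ₀ * ‖z - y‖ ≤ g z := by
    have := abs_le.mp (by rwa [Real.norm_eq_abs] at hlip)
    linarith [this.1]
  calc f y * Real.exp (-(δ₀ * ‖z - y‖)) = Real.exp (g y - δ₀ * ‖z - y‖) := by
        rw [Real.exp_sub, Real.exp_neg, hg]
        rw [Real.exp_log (hpos y hy)]
        ring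
    _ ≤ Real.exp (g z) := Real.exp_le_exp.mpr h1
    _ = f z := by rw [hg, Real.exp_log (hpos z hz)]

set_option maxHeartbeats 1000000

theorem statement19 (d : ℕ) (hd : 2 ≤ d) (γ : ℝ) (hγ : 0 < γ) :
    ∃ (δ₀ R₁ : ℝ) (L₀ : ℕ), 0 < δ₀ ∧ 0 < R₁ ∧ 0 < L₀ ∧
      ∀ (Ω : Type) [MeasurableSpace Ω] (P : MeasureTheory.Measure Ω),
        MeasureTheory.IsProbabilityMeasure P →
        ∀ X : Ω → EuclideanSpace ℝ (Fin d), Measurable X →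
        ∀ R₀ : ℝ, 0 < R₀ →
        ∀ f : EuclideanSpace ℝ (Fin d) → ℝ,
          (∀ x : EuclideanSpace ℝ (Fin d), ‖x‖ < R₀ → 0 < f x) →
          (∀ x : EuclideanSpace ℝ (Fin d), ‖x‖ < R₀ → DifferentiableAt ℝ f x) →
          (∀ A : Set (EuclideanSpace ℝ (Fin d)), MeasurableSet A →
            A ⊆ Metric.ball 0 R₀ → (P (X ⁻¹' A)).toReal = ∫ x in A, f x) →
          (∀ x : EuclideanSpace ℝ (Fin d), ‖x‖ < R₀ →
            ‖gradient (fun y => Real.log (f y)) x‖ ≤ δ₀) →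
          ∀ a : EuclideanSpace ℝ (Fin d),
            (⨆ x : ℤ,
                (P {ω : Ω | ∑ i, a i * (round (X ω i) : ℝ) = (x : ℝ)}).toReal) ≤
              γ * sSup {p : ℝ | ∃ (e : EuclideanSpace ℝ (Fin d)) (t : ℝ), ‖e‖ = 1 ∧
                  p = (P {ω : Ω | ⟪e, X ω⟫ ∈ Set.Ioo t (t + 1)}).toReal} +
                (P {ω : Ω | R₀ - R₁ ≤ ‖X ω‖}).toReal ∨
            ∃ κ : ℝ, κ ≠ 0 ∧ ∀ i : Fin d, ∃ m : ℤ, |m| ≤ (L₀ : ℤ) ∧ κ * a i = (m : ℝ) := by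
  classical
  set K : ℕ := 2*d + 3 with hK
  set N : ℕ := ⌈(2*K : ℝ)/γ⌉₊ + 1 with hN
  set Q : ℕ := 2*N with hQdef
  set Wn : ℕ := N * Q * d with hWn
  have hNpos : 0 < N := Nat.succ_pos _
  have hQpos : 0 < Q := by omega
  have hWpos : 0 < Wn := by
    have : 0 < d := by omega
    positivity
  have hWR : (0:ℝ) < (Wn:ℝ) := by exact_mod_cast hWpos
  have hlog2 : (0:ℝ) < Real.log 2 := Real.log_pos one_lt_two
  refine ⟨Real.log 2 / (Wn:ℝ), (Wn:ℝ) + 1, Q^d, div_pos hlog2 hWR, by linarith,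
    pow_pos hQpos d, ?_⟩

  intro Ω _ P hP X hX R₀ hR₀ f hfpos hfdiff hPf hgrad a
  by_cases ha0 : a = 0
  · refine Or.inr ⟨1, one_ne_zero, fun i => ⟨0, by simp, by rw [ha0]; simp⟩⟩
  rcases dichotomy d Q (by omega) a ha0 with ⟨u, hub, hs_pos, hs_le⟩ | hgood
  swap
  · exact Or.inr hgood
  left
  have han : (0:ℝ) < ‖a‖ := norm_pos_iff.mpr ha0
  set s : ℝ := ∑ i, a i * (u i : ℝ) with hs_def
  set uR : EuclideanSpace ℝ (Fin d) :=
    (WithLp.toLp 2 (fun i => (u i : ℝ)) : EuclideanSpace ℝ (Fin d)) with huR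
  have huRb : ∀ i, |uR i| ≤ (Q:ℝ) := by
    intro i
    have h0 : uR i = (u i : ℝ) := rfl
    rw [h0, ← Int.cast_abs]
    have h := (Int.cast_le (R := ℝ)).mpr (hub i)
    simpa using h
  have huRnorm : ‖uR‖ ≤ (d:ℝ) * Q := norm_vec_le d Q (by positivity) uR huRb
  have hsmul_norm : ∀ k : ℕ, k ≤ N → ‖(k:ℝ) • uR‖ ≤ (Wn:ℝ) := by
    intro k hk
    rw [norm_smul, Real.norm_natCast]
    calc (k:ℝ) * ‖uR‖ ≤ (N:ℝ) * ((d:ℝ) * Q) := by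
          apply mul_le_mul (by exact_mod_cast hk) huRnorm (norm_nonneg _) (Nat.cast_nonneg N)
      _ = (Wn:ℝ) := by rw [hWn]; push_cast; ring
  set tailE : Set Ω := {ω : Ω | R₀ - ((Wn:ℝ)+1) ≤ ‖X ω‖} with htailE
  set qq := sSup {p : ℝ | ∃ (e : EuclideanSpace ℝ (Fin d)) (t : ℝ), ‖e‖ = 1 ∧
      p = (P {ω : Ω | ⟪e, X ω⟫ ∈ Set.Ioo t (t + 1)}).toReal} with hqq
  have hbdd : BddAbove {p : ℝ | ∃ (e : EuclideanSpace ℝ (Fin d)) (t : ℝ), ‖e‖ = 1 ∧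
      p = (P {ω : Ω | ⟪e, X ω⟫ ∈ Set.Ioo t (t + 1)}).toReal} := by
    refine ⟨1, fun p hp => ?_⟩
    obtain ⟨e, t, -, rfl⟩ := hp
    exact (ENNReal.toReal_mono ENNReal.one_ne_top prob_le_one).trans_eq ENNReal.toReal_one
  have hq0 : 0 ≤ qq := by
    have hmem : (P {ω : Ω | ⟪(EuclideanSpace.single (⟨0, by omega⟩ : Fin d) (1:ℝ)), X ω⟫ ∈
        Set.Ioo (0:ℝ) (0 + 1)}).toReal ∈ {p : ℝ | ∃ (e : EuclideanSpace ℝ (Fin d)) (t : ℝ),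
        ‖e‖ = 1 ∧ p = (P {ω : Ω | ⟪e, X ω⟫ ∈ Set.Ioo t (t + 1)}).toReal} :=
      ⟨_, 0, by simp [EuclideanSpace.norm_single], rfl⟩
    exact le_trans ENNReal.toReal_nonneg (le_csSup hbdd hmem)
  apply ciSup_le
  intro x
  by_cases hRR : R₀ - ((Wn:ℝ)+1) ≤ 0
  · have htuniv : tailE = Set.univ := by
      ext ω
      simp only [htailE, Set.mem_setOf_eq, Set.mem_univ, iff_true]
      exact le_trans hRR (norm_nonneg _)
    have h1 : (P {ω : Ω | ∑ i, a i * (round (X ω i) : ℝ) = (x : ℝ)}).toReal ≤ 1 :=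
      (ENNReal.toReal_mono ENNReal.one_ne_top prob_le_one).trans_eq ENNReal.toReal_one
    have h2 : (P tailE).toReal = 1 := by rw [htuniv, measure_univ, ENNReal.toReal_one]
    rw [h2]
    nlinarith [mul_nonneg hγ.le hq0]
  push_neg at hRR
  -- the translated level sets
  set T : ℕ → Set (EuclideanSpace ℝ (Fin d)) := fun k =>
    {y | ‖y - (k:ℝ) • uR‖ < R₀ - ((Wn:ℝ)+1) ∧
      ∑ i, a i * (round (y i) : ℝ) = (x:ℝ) + (k:ℝ) * s} with hT
  have hround_meas : Measurable
      (fun y : EuclideanSpace ℝ (Fin d) => ∑ i, a i * (round (y i) : ℝ)) := by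
    apply Finset.measurable_sum
    intro i _
    apply Measurable.const_mul
    have h1 : Measurable (fun y : EuclideanSpace ℝ (Fin d) => y i) :=
      (EuclideanSpace.proj i).continuous.measurable
    have h2 : Measurable (round : ℝ → ℤ) := by
      have hre : (round : ℝ → ℤ) = fun z => ⌊z + 1/2⌋ := funext round_eq
      rw [hre]; exact (measurable_id.add_const _).floor
    exact (measurable_from_top.comp (h2.comp h1) :
      Measurable fun y : EuclideanSpace ℝ (Fin d) => ((round (y i) : ℤ) : ℝ))
  have hTmeas : ∀ k : ℕ, MeasurableSet (T k) := by
    intro k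
    have hrepr : T k = Metric.ball ((k:ℝ) • uR) (R₀ - ((Wn:ℝ)+1)) ∩
        ((fun y : EuclideanSpace ℝ (Fin d) => ∑ i, a i * (round (y i) : ℝ)) ⁻¹'
          {(x:ℝ) + (k:ℝ)*s}) := by
      ext y
      simp [hT, Metric.mem_ball, dist_eq_norm]
    rw [hrepr]
    exact measurableSet_ball.inter (hround_meas (measurableSet_singleton _))
  have hTsub1 : ∀ k : ℕ, k ≤ N → ∀ y ∈ T k, ‖y‖ ≤ R₀ - 1 := by
    intro k hk y hy
    obtain ⟨h1, -⟩ := hy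
    calc ‖y‖ = ‖(y - (k:ℝ) • uR) + (k:ℝ) • uR‖ := by rw [sub_add_cancel]
      _ ≤ ‖y - (k:ℝ) • uR‖ + ‖(k:ℝ) • uR‖ := norm_add_le _ _
      _ ≤ (R₀ - ((Wn:ℝ)+1)) + (Wn:ℝ) := add_le_add h1.le (hsmul_norm k hk)
      _ = R₀ - 1 := by ring
  have hTball : ∀ k : ℕ, k ≤ N → T k ⊆ Metric.ball (0:EuclideanSpace ℝ (Fin d)) R₀ :=
    fun k hk y hy => mem_ball_zero_iff.mpr (lt_of_le_of_lt (hTsub1 k hk y hy) (by linarith))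
  have hμint : ∀ k : ℕ, k ≤ N → (P (X ⁻¹' T k)).toReal = ∫ y in T k, f y :=
    fun k hk => hPf (T k) (hTmeas k) (hTball k hk)
  have hks_sum : ∀ k : ℕ, ∑ i, a i * ((k:ℝ) * (u i:ℝ)) = (k:ℝ) * s := by
    intro k
    rw [hs_def, Finset.mul_sum]
    apply Finset.sum_congr rfl
    intro i _
    ring
  have himg : ∀ k : ℕ, T k = (· + (k:ℝ) • uR) '' (T 0) := by
    intro k
    ext y
    simp only [hT, Set.mem_setOf_eq, Set.mem_image]
    constructor
    · rintro ⟨h1, h2⟩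
      refine ⟨y - (k:ℝ) • uR, ⟨?_, ?_⟩, by abel⟩
      · rw [Nat.cast_zero, zero_smul, sub_zero]
        exact h1
      · have hterm : ∀ i, a i * (round ((y - (k:ℝ) • uR) i) : ℝ)
            = a i * (round (y i) : ℝ) - a i * ((k:ℝ) * (u i : ℝ)) := by
          intro i
          have hco : (y - (k:ℝ) • uR) i = y i - Int.cast ((k:ℤ) * (u i)) := by
            have hco2 : (y - (k:ℝ) • uR) i = y i - (k:ℝ) * (u i : ℝ) := rfl
            rw [hco2]; push_cast; ring
          rw [hco, round_sub_intCast]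
          push_cast
          ring
        rw [Finset.sum_congr rfl (fun i _ => hterm i), Finset.sum_sub_distrib, h2, hks_sum k]
        push_cast
        ring
    · rintro ⟨z, ⟨hz1, hz2⟩, rfl⟩
      rw [Nat.cast_zero, zero_smul, sub_zero] at hz1
      rw [Nat.cast_zero, zero_mul, add_zero] at hz2
      constructor
      · rw [add_sub_cancel_right]
        exact hz1
      · have hterm : ∀ i, a i * (round ((z + (k:ℝ) • uR) i) : ℝ)
            = a i * (round (z i) : ℝ) + a i * ((k:ℝ) * (u i : ℝ)) := by
          intro i
          have hco : (z + (k:ℝ) • uR) i = z i + Int.cast ((k:ℤ) * (u i)) := by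
            have hco2 : (z + (k:ℝ) • uR) i = z i + (k:ℝ) * (u i : ℝ) := rfl
            rw [hco2]; push_cast; ring
          rw [hco, round_add_intCast]
          push_cast
          ring
        rw [Finset.sum_congr rfl (fun i _ => hterm i), Finset.sum_add_distrib, hz2, hks_sum k]
  -- integrability data
  have hfc : ContinuousOn f (Metric.ball (0:EuclideanSpace ℝ (Fin d)) R₀) :=
    fun z hz => ((hfdiff z (mem_ball_zero_iff.mp hz)).continuousAt).continuousWithinAt
  obtain ⟨C, hC⟩ := (isCompact_closedBall (0:EuclideanSpace ℝ (Fin d))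
    (R₀-1)).exists_bound_of_continuousOn
    (hfc.mono (Metric.closedBall_subset_ball (by linarith)))
  have hT0vol : volume (T 0) < ⊤ :=
    lt_of_le_of_lt (measure_mono (hTball 0 (Nat.zero_le N))) measure_ball_lt_top
  have hint0 : IntegrableOn f (T 0) := by
    refine ⟨(hfc.mono (hTball 0 (Nat.zero_le N))).aestronglyMeasurable (hTmeas 0),
      HasFiniteIntegral.restrict_of_bounded (C := C) hT0vol ?_⟩
    refine (ae_restrict_iff' (hTmeas 0)).mpr (Filter.Eventually.of_forall ?_)
    intro y hy
    exact hC y (Metric.mem_closedBall.mpr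
      (by rw [dist_zero_right]; exact hTsub1 0 (Nat.zero_le N) y hy))
  have hT0norm : ∀ z ∈ T 0, ‖z‖ < R₀ - ((Wn:ℝ)+1) := by
    intro z hz
    have := hz.1
    rwa [Nat.cast_zero, zero_smul, sub_zero] at this
  have hlow : ∀ k : ℕ, 1 ≤ k → k ≤ N →
      2⁻¹ * (P (X ⁻¹' T 0)).toReal ≤ (P (X ⁻¹' T k)).toReal := by
    intro k h1k hkN
    set w : EuclideanSpace ℝ (Fin d) := (k:ℝ) • uR with hw
    have hwn : ‖w‖ ≤ (Wn:ℝ) := hsmul_norm k hkN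
    have hzw : ∀ z ∈ T 0, ‖z + w‖ < R₀ := by
      intro z hz
      calc ‖z + w‖ ≤ ‖z‖ + ‖w‖ := norm_add_le _ _
        _ < (R₀ - ((Wn:ℝ)+1)) + (Wn:ℝ) := add_lt_add_of_lt_of_le (hT0norm z hz) hwn
        _ < R₀ := by linarith
    have hpt : ∀ z ∈ T 0, 2⁻¹ * f z ≤ f (z + w) := by
      intro z hz
      have hz1 : ‖z‖ < R₀ := by linarith [hT0norm z hz, hWR]
      have hds := density_shift hfpos hfdiff hgrad hz1 (hzw z hz)
      rw [add_sub_cancel_left] at hds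
      refine le_trans ?_ hds
      have hexp : (2:ℝ)⁻¹ ≤ Real.exp (-(Real.log 2 / (Wn:ℝ) * ‖w‖)) := by
        rw [← Real.exp_log (show (0:ℝ) < 2⁻¹ by norm_num), Real.log_inv]
        apply Real.exp_le_exp.mpr
        have hδnn : 0 ≤ Real.log 2 / (Wn:ℝ) := le_of_lt (div_pos hlog2 hWR)
        have hwb : Real.log 2 / (Wn:ℝ) * ‖w‖ ≤ Real.log 2 / (Wn:ℝ) * (Wn:ℝ) :=
          mul_le_mul_of_nonneg_left hwn hδnn
        rw [div_mul_cancel₀ _ hWR.ne'] at hwb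
        linarith
      have hfz : 0 ≤ f z := (hfpos z hz1).le
      calc 2⁻¹ * f z ≤ Real.exp (-(Real.log 2 / (Wn:ℝ) * ‖w‖)) * f z :=
            mul_le_mul_of_nonneg_right hexp hfz
        _ = f z * Real.exp (-(Real.log 2 / (Wn:ℝ) * ‖w‖)) := mul_comm _ _
    have hintk : IntegrableOn (fun z => f (z + w)) (T 0) := by
      refine ⟨?_, HasFiniteIntegral.restrict_of_bounded (C := C) hT0vol ?_⟩
      · apply ContinuousOn.aestronglyMeasurable _ (hTmeas 0)
        apply hfc.comp (continuous_add_right w).continuousOn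
        intro z hz
        exact mem_ball_zero_iff.mpr (hzw z hz)
      · refine (ae_restrict_iff' (hTmeas 0)).mpr (Filter.Eventually.of_forall ?_)
        intro z hz
        apply hC
        rw [Metric.mem_closedBall, dist_zero_right]
        calc ‖z + w‖ ≤ ‖z‖ + ‖w‖ := norm_add_le _ _
          _ ≤ (R₀ - ((Wn:ℝ)+1)) + (Wn:ℝ) := add_le_add (hT0norm z hz).le hwn
          _ = R₀ - 1 := by ring
    rw [hμint k hkN, hμint 0 (Nat.zero_le N), himg k]
    rw [(measurePreserving_add_right volume w).setIntegral_image_emb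
      (MeasurableEquiv.addRight w).measurableEmbedding f (T 0)]
    calc 2⁻¹ * ∫ y in T 0, f y = ∫ y in T 0, 2⁻¹ * f y := (integral_const_mul _ _).symm
      _ ≤ ∫ z in T 0, f (z + w) :=
          setIntegral_mono_on (hint0.const_mul _) hintk (hTmeas 0) hpt
  -- disjointness and the slab cover
  have hdisjP : (↑(Finset.range (N+1)) : Set ℕ).PairwiseDisjoint (fun k => X ⁻¹' T k) := by
    intro i hi j hj hij
    refine Set.disjoint_left.mpr ?_
    intro ω hωi hωj
    have e1 : (x:ℝ) + (i:ℝ)*s = (x:ℝ) + (j:ℝ)*s := by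
      rw [← hωi.2, ← hωj.2]
    have e2 : (i:ℝ) = (j:ℝ) := by
      have : (i:ℝ)*s = (j:ℝ)*s := by linarith
      exact mul_right_cancel₀ hs_pos.ne' this
    exact hij (by exact_mod_cast e2)
  set ahat : EuclideanSpace ℝ (Fin d) := ‖a‖⁻¹ • a with hahat
  have hahat_norm : ‖ahat‖ = 1 := by
    rw [hahat, norm_smul, norm_inv, norm_norm, inv_mul_cancel₀ han.ne']
  have hinner : ∀ y : EuclideanSpace ℝ (Fin d), ⟪ahat, y⟫ = ‖a‖⁻¹ * ∑ i, a i * y i := by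
    intro y
    rw [hahat, real_inner_smul_left]
    congr 1
    rw [PiLp.inner_apply]; exact Finset.sum_congr rfl (fun i _ => by simp [mul_comm])
  set tfun : ℕ → ℝ := fun m => (x:ℝ)/‖a‖ - (d:ℝ)/2 - 4⁻¹ + (m:ℝ)/2 with htfun
  have hcover : X ⁻¹' (⋃ k ∈ Finset.range (N+1), T k) ⊆
      ⋃ m ∈ Finset.range K, {ω : Ω | ⟪ahat, X ω⟫ ∈ Set.Ioo (tfun m) (tfun m + 1)} := by
    intro ω hω
    simp only [Set.mem_preimage, Set.mem_iUnion, Finset.mem_range, exists_prop] at hω ⊢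
    obtain ⟨k, hk, hmem⟩ := hω
    have hkN : k ≤ N := by omega
    obtain ⟨-, h2⟩ := hmem
    have hdev : |(∑ i, a i * X ω i) - ((x:ℝ) + (k:ℝ)*s)| ≤ (d:ℝ) * ‖a‖ / 2 := by
      rw [← h2]
      have hre : (∑ i, a i * X ω i) - ∑ i, a i * (round (X ω i):ℝ)
          = ∑ i, a i * (X ω i - (round (X ω i):ℝ)) := by
        rw [← Finset.sum_sub_distrib]
        apply Finset.sum_congr rfl
        intro i _
        ring
      rw [hre]
      calc |∑ i, a i * (X ω i - (round (X ω i):ℝ))|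
          ≤ ∑ i, |a i * (X ω i - (round (X ω i):ℝ))| := Finset.abs_sum_le_sum_abs _ _
        _ ≤ ∑ _i : Fin d, ‖a‖ * 2⁻¹ := by
            apply Finset.sum_le_sum
            intro i _
            rw [abs_mul]
            apply mul_le_mul (coord_le_norm d a i) ?_ (abs_nonneg _) (norm_nonneg _)
            have hr := abs_sub_round (X ω i)
            linarith
        _ = (d:ℝ) * ‖a‖ / 2 := by
            rw [Finset.sum_const, Finset.card_univ, Fintype.card_fin, nsmul_eq_mul]
            ring
    have hks0 : 0 ≤ (k:ℝ) * s := mul_nonneg (Nat.cast_nonneg k) hs_pos.le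
    have hks2 : (k:ℝ) * s ≤ ‖a‖/2 := by
      calc (k:ℝ)*s ≤ (N:ℝ)*s :=
            mul_le_mul_of_nonneg_right (by exact_mod_cast hkN) hs_pos.le
        _ ≤ (N:ℝ) * (‖a‖/Q) := mul_le_mul_of_nonneg_left hs_le (Nat.cast_nonneg N)
        _ = ‖a‖/2 := by
            rw [hQdef]
            have hN0 : (N:ℝ) ≠ 0 := by exact_mod_cast hNpos.ne'
            push_cast
            field_simp
    set θ : ℝ := ⟪ahat, X ω⟫ with hθ
    have hθeq : θ * ‖a‖ = ∑ i, a i * X ω i := by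
      rw [hθ, hinner (X ω)]
      field_simp
    clear_value θ
    have hd1 := abs_le.mp hdev
    have h3 : (θ - ((x:ℝ)/‖a‖ - (d:ℝ)/2)) * ‖a‖
        = (∑ i, a i * X ω i) - (x:ℝ) + (d:ℝ)*‖a‖/2 := by
      rw [← hθeq]
      field_simp
      ring
    set β : ℝ := θ - ((x:ℝ)/‖a‖ - (d:ℝ)/2) with hβ
    have hβ1 : 0 ≤ β := by
      have h4 : 0 * ‖a‖ ≤ β * ‖a‖ := by rw [zero_mul, h3]; linarith [hd1.1, hks0]
      exact le_of_mul_le_mul_right h4 han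
    have hβ2 : β ≤ (d:ℝ) + 2⁻¹ := by
      have h4 : β * ‖a‖ ≤ ((d:ℝ) + 2⁻¹) * ‖a‖ := by
        have hexp : ((d:ℝ) + 2⁻¹) * ‖a‖ = (d:ℝ)*‖a‖ + ‖a‖/2 := by ring
        rw [h3]
        linarith [hd1.2, hks2, hexp]
      exact le_of_mul_le_mul_right h4 han
    have hβθ : θ = β + ((x:ℝ)/‖a‖ - (d:ℝ)/2) := by rw [hβ]; ring
    clear_value β
    refine ⟨⌊2*β⌋₊, ?_, ?_, ?_⟩
    · have hfl : (⌊2*β⌋₊ : ℝ) ≤ 2*β := Nat.floor_le (by linarith)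
      have h5 : (⌊2*β⌋₊ : ℝ) ≤ ((2*d + 1 : ℕ) : ℝ) := by push_cast; linarith
      have h4 : ⌊2*β⌋₊ ≤ 2*d + 1 := by exact_mod_cast h5
      omega
    · have hfl : (⌊2*β⌋₊ : ℝ) ≤ 2*β := Nat.floor_le (by linarith)
      show tfun ⌊2*β⌋₊ < inner ℝ ahat (X ω)
      rw [← hθ]
      simp only [htfun]
      linarith
    · have hfl : 2*β < (⌊2*β⌋₊ : ℝ) + 1 := Nat.lt_floor_add_one _
      show inner ℝ ahat (X ω) < tfun ⌊2*β⌋₊ + 1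
      rw [← hθ]
      simp only [htfun]
      linarith
  -- putting the measure bounds together
  have hsum_eq : (P (X ⁻¹' (⋃ k ∈ Finset.range (N+1), T k))).toReal
      = ∑ k ∈ Finset.range (N+1), (P (X ⁻¹' T k)).toReal := by
    rw [Set.preimage_iUnion₂,
      measure_biUnion_finset hdisjP (fun k _ => hX (hTmeas k))]
    exact ENNReal.toReal_sum (fun k _ => measure_ne_top P _)
  have hKq : (P (X ⁻¹' (⋃ k ∈ Finset.range (N+1), T k))).toReal ≤ (K:ℝ) * qq := by
    have h1 : P (X ⁻¹' (⋃ k ∈ Finset.range (N+1), T k)) ≤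
        ∑ m ∈ Finset.range K, P {ω : Ω | ⟪ahat, X ω⟫ ∈ Set.Ioo (tfun m) (tfun m + 1)} :=
      le_trans (measure_mono hcover) (measure_biUnion_finset_le _ _)
    have h2 : (∑ m ∈ Finset.range K,
        P {ω : Ω | ⟪ahat, X ω⟫ ∈ Set.Ioo (tfun m) (tfun m + 1)}) ≠ ⊤ :=
      (ENNReal.sum_lt_top.mpr (fun m _ => measure_lt_top P _)).ne
    calc (P (X ⁻¹' (⋃ k ∈ Finset.range (N+1), T k))).toReal
        ≤ (∑ m ∈ Finset.range K,
            P {ω : Ω | ⟪ahat, X ω⟫ ∈ Set.Ioo (tfun m) (tfun m + 1)}).toReal :=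
          ENNReal.toReal_mono h2 h1
      _ = ∑ m ∈ Finset.range K,
            (P {ω : Ω | ⟪ahat, X ω⟫ ∈ Set.Ioo (tfun m) (tfun m + 1)}).toReal :=
          ENNReal.toReal_sum (fun m _ => measure_ne_top P _)
      _ ≤ ∑ _m ∈ Finset.range K, qq :=
          Finset.sum_le_sum (fun m _ => le_csSup hbdd ⟨ahat, tfun m, hahat_norm, rfl⟩)
      _ = (K:ℝ) * qq := by rw [Finset.sum_const, Finset.card_range, nsmul_eq_mul]
  have hsum_ge : (P (X ⁻¹' T 0)).toReal + (N:ℝ) * (2⁻¹ * (P (X ⁻¹' T 0)).toReal)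
      ≤ (P (X ⁻¹' (⋃ k ∈ Finset.range (N+1), T k))).toReal := by
    rw [hsum_eq, Finset.sum_range_succ']
    have h5 : (N:ℝ) * (2⁻¹ * (P (X ⁻¹' T 0)).toReal)
        ≤ ∑ i ∈ Finset.range N, (P (X ⁻¹' T (i+1))).toReal := by
      calc (N:ℝ) * (2⁻¹ * (P (X ⁻¹' T 0)).toReal)
          = ∑ _i ∈ Finset.range N, 2⁻¹ * (P (X ⁻¹' T 0)).toReal := by
            rw [Finset.sum_const, Finset.card_range, nsmul_eq_mul]
        _ ≤ ∑ i ∈ Finset.range N, (P (X ⁻¹' T (i+1))).toReal := by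
            apply Finset.sum_le_sum
            intro i hi
            have := Finset.mem_range.mp hi
            exact hlow (i+1) (by omega) (by omega)
    linarith
  have hμ0γ : (P (X ⁻¹' T 0)).toReal ≤ γ * qq := by
    have hA := hsum_ge.trans hKq
    have hNge : 2*(K:ℝ) ≤ γ * N := by
      have h1 : (2*K:ℝ)/γ ≤ (⌈(2*(K:ℝ))/γ⌉₊ : ℝ) := by
        have := Nat.le_ceil ((2*(K:ℝ))/γ)
        exact_mod_cast this
      have h2 : ((⌈(2*(K:ℝ))/γ⌉₊ : ℕ):ℝ) ≤ (N:ℝ) := by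
        rw [hN]
        exact_mod_cast Nat.le_succ _
      rw [div_le_iff₀ hγ] at h1
      nlinarith
    have hμ0nn : 0 ≤ (P (X ⁻¹' T 0)).toReal := ENNReal.toReal_nonneg
    nlinarith [mul_nonneg hq0 (Nat.cast_nonneg N : (0:ℝ) ≤ N), mul_nonneg hγ.le hq0,
      mul_nonneg hμ0nn (Nat.cast_nonneg N : (0:ℝ) ≤ N)]
  have hfinal : (P {ω : Ω | ∑ i, a i * (round (X ω i) : ℝ) = (x : ℝ)}).toReal
      ≤ (P (X ⁻¹' T 0)).toReal + (P tailE).toReal := by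
    have hsub : {ω : Ω | ∑ i, a i * (round (X ω i) : ℝ) = (x : ℝ)} ⊆
        (X ⁻¹' T 0) ∪ tailE := by
      intro ω hω
      by_cases hn : ‖X ω‖ < R₀ - ((Wn:ℝ)+1)
      · left
        refine ⟨?_, ?_⟩
        · rw [Nat.cast_zero, zero_smul, sub_zero]
          exact hn
        · rw [Nat.cast_zero, zero_mul, add_zero]
          exact hω
      · right
        exact not_lt.mp hn
    calc (P {ω : Ω | ∑ i, a i * (round (X ω i) : ℝ) = (x : ℝ)}).toReal
        ≤ (P ((X ⁻¹' T 0) ∪ tailE)).toReal :=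
          ENNReal.toReal_mono (measure_ne_top P _) (measure_mono hsub)
      _ ≤ ((P (X ⁻¹' T 0)) + P tailE).toReal :=
          ENNReal.toReal_mono
            (ENNReal.add_ne_top.mpr ⟨measure_ne_top P _, measure_ne_top P _⟩)
            (measure_union_le _ _)
      _ = (P (X ⁻¹' T 0)).toReal + (P tailE).toReal :=
          ENNReal.toReal_add (measure_ne_top P _) (measure_ne_top P _)
  linarith
end
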